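/- arXiv:1506.01604 — 3 statements merged into one kernel-verified Lean document; each statement's English description precedes it below -/
import Mathlib

section
/- In ℚ[SL₂(F)], the idempotent π₂ induces a character of the support-class algebra with values A ↦ q−1, B ↦ q−1, C ↦ 2(q−1), D₊ ↦ 1−q, D₋ ↦ 1−q, E₊ ↦ 1−q, E₋ ↦ 1−q; concretely: A·π₂ = (q−1)·π₂, B·π₂ = (q−1)·π₂, C·π₂ = 2(q−1)·π₂, D₊·π₂ = (1−q)·π₂, D₋·π₂ = (1−q)·π₂, E₊·π₂ = (1−q)·π₂, and E₋·π₂ = (1−q)·π₂. -/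
open MonoidAlgebra

/-- Sum of all elements of `SL₂(F)` whose support pattern is given by the four
Booleans (`true` = the entry is nonzero, `false` = the entry is zero). -/
noncomputable def suppClass (R : Type*) [CommRing R] (F : Type*) [Field F] [Fintype F]
    [DecidableEq F] (b₁₁ b₁₂ b₂₁ b₂₂ : Bool) :
    MonoidAlgebra R (Matrix.SpecialLinearGroup (Fin 2) F) :=
  ∑ g ∈ Finset.univ.filter
      (fun g : Matrix.SpecialLinearGroup (Fin 2) F =>
        (b₁₁ = true ↔ (g : Matrix (Fin 2) (Fin 2) F) 0 0 ≠ 0) ∧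
        (b₁₂ = true ↔ (g : Matrix (Fin 2) (Fin 2) F) 0 1 ≠ 0) ∧
        (b₂₁ = true ↔ (g : Matrix (Fin 2) (Fin 2) F) 1 0 ≠ 0) ∧
        (b₂₂ = true ↔ (g : Matrix (Fin 2) (Fin 2) F) 1 1 ≠ 0)),
    MonoidAlgebra.of R (Matrix.SpecialLinearGroup (Fin 2) F) g

/-- The support class `A` (diagonal matrices). -/
noncomputable def elA (R : Type*) [CommRing R] (F : Type*) [Field F] [Fintype F] [DecidableEq F] :=
  suppClass R F true false false true
/-- The support class `B` (antidiagonal matrices). -/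
noncomputable def elB (R : Type*) [CommRing R] (F : Type*) [Field F] [Fintype F] [DecidableEq F] :=
  suppClass R F false true true false
/-- The support class `C` (matrices with all entries nonzero). -/
noncomputable def elC (R : Type*) [CommRing R] (F : Type*) [Field F] [Fintype F] [DecidableEq F] :=
  suppClass R F true true true true
/-- The support class `D₊` (upper triangular with nonzero entries). -/
noncomputable def elDp (R : Type*) [CommRing R] (F : Type*) [Field F] [Fintype F] [DecidableEq F] :=
  suppClass R F true true false true
/-- The support class `D₋` (lower triangular with nonzero entries). -/
noncomputable def elDm (R : Type*) [CommRing R] (F : Type*) [Field F] [Fintype F] [DecidableEq F] :=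
  suppClass R F true false true true
/-- The support class `E₊`. -/
noncomputable def elEp (R : Type*) [CommRing R] (F : Type*) [Field F] [Fintype F] [DecidableEq F] :=
  suppClass R F true true true false
/-- The support class `E₋`. -/
noncomputable def elEm (R : Type*) [CommRing R] (F : Type*) [Field F] [Fintype F] [DecidableEq F] :=
  suppClass R F false true true true

namespace Pi2Aux
set_option linter.unusedSectionVars false
variable {F : Type*} [Field F] [Fintype F] [DecidableEq F]

local notation "SL2" => Matrix.SpecialLinearGroup (Fin 2) F

/-- the filter used in `suppClass` -/
noncomputable def fil (b₁₁ b₁₂ b₂₁ b₂₂ : Bool) : Finset (Matrix.SpecialLinearGroup (Fin 2) F) :=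
  Finset.univ.filter
      (fun g : Matrix.SpecialLinearGroup (Fin 2) F =>
        (b₁₁ = true ↔ (g : Matrix (Fin 2) (Fin 2) F) 0 0 ≠ 0) ∧
        (b₁₂ = true ↔ (g : Matrix (Fin 2) (Fin 2) F) 0 1 ≠ 0) ∧
        (b₂₁ = true ↔ (g : Matrix (Fin 2) (Fin 2) F) 1 0 ≠ 0) ∧
        (b₂₂ = true ↔ (g : Matrix (Fin 2) (Fin 2) F) 1 1 ≠ 0))

lemma suppClass_eq (b₁₁ b₁₂ b₂₁ b₂₂ : Bool) :
    suppClass ℚ F b₁₁ b₁₂ b₂₁ b₂₂ = ∑ g ∈ fil b₁₁ b₁₂ b₂₁ b₂₂, of ℚ SL2 g := rfl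

lemma mem_fil {b₁₁ b₁₂ b₂₁ b₂₂ : Bool} {g : SL2} :
    g ∈ fil b₁₁ b₁₂ b₂₁ b₂₂ ↔
      ((b₁₁ = true ↔ (g : Matrix (Fin 2) (Fin 2) F) 0 0 ≠ 0) ∧
        (b₁₂ = true ↔ (g : Matrix (Fin 2) (Fin 2) F) 0 1 ≠ 0) ∧
        (b₂₁ = true ↔ (g : Matrix (Fin 2) (Fin 2) F) 1 0 ≠ 0) ∧
        (b₂₂ = true ↔ (g : Matrix (Fin 2) (Fin 2) F) 1 1 ≠ 0)) := by
  simp [fil]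

lemma mul_entry (t g : SL2) (i j : Fin 2) :
    ((t * g : SL2) : Matrix (Fin 2) (Fin 2) F) i j =
      (t : Matrix (Fin 2) (Fin 2) F) i 0 * (g : Matrix (Fin 2) (Fin 2) F) 0 j +
      (t : Matrix (Fin 2) (Fin 2) F) i 1 * (g : Matrix (Fin 2) (Fin 2) F) 1 j := by
  simp [Matrix.SpecialLinearGroup.coe_mul, Matrix.mul_apply, Fin.sum_univ_two]

lemma of_mul_suppClass (t : SL2) (b₁₁ b₁₂ b₂₁ b₂₂ c₁₁ c₁₂ c₂₁ c₂₂ : Bool)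
    (key : ∀ g : SL2, g ∈ (fil b₁₁ b₁₂ b₂₁ b₂₂ : Finset SL2) ↔ t * g ∈ (fil c₁₁ c₁₂ c₂₁ c₂₂ : Finset SL2)) :
    of ℚ SL2 t * suppClass ℚ F b₁₁ b₁₂ b₂₁ b₂₂ = suppClass ℚ F c₁₁ c₁₂ c₂₁ c₂₂ := by
  rw [suppClass_eq, suppClass_eq, Finset.mul_sum]
  refine Finset.sum_bij' (fun g _ => t * g) (fun h _ => t⁻¹ * h) ?_ ?_ ?_ ?_ ?_
  · intro a ha; exact (key a).mp ha
  · intro a ha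
    rw [key]
    simpa using ha
  · intro a ha; group
  · intro a ha; group
  · intro a ha; rw [← map_mul]


lemma det_entries (g : SL2) :
    (g : Matrix (Fin 2) (Fin 2) F) 0 0 * (g : Matrix (Fin 2) (Fin 2) F) 1 1 -
      (g : Matrix (Fin 2) (Fin 2) F) 0 1 * (g : Matrix (Fin 2) (Fin 2) F) 1 0 = 1 := by
  have := g.prop
  rwa [Matrix.det_fin_two] at this

lemma of_diag_mul (t : SL2) (ht01 : (t : Matrix (Fin 2) (Fin 2) F) 0 1 = 0)
    (ht10 : (t : Matrix (Fin 2) (Fin 2) F) 1 0 = 0) (b₁₁ b₁₂ b₂₁ b₂₂ : Bool) :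
    of ℚ SL2 t * suppClass ℚ F b₁₁ b₁₂ b₂₁ b₂₂ = suppClass ℚ F b₁₁ b₁₂ b₂₁ b₂₂ := by
  have hd := det_entries t
  rw [ht01, ht10] at hd
  have ht00 : (t : Matrix (Fin 2) (Fin 2) F) 0 0 ≠ 0 := by
    intro h; rw [h] at hd; simp at hd
  have ht11 : (t : Matrix (Fin 2) (Fin 2) F) 1 1 ≠ 0 := by
    intro h; rw [h] at hd; simp at hd
  apply of_mul_suppClass
  intro g
  rw [mem_fil, mem_fil]
  simp [mul_entry, ht01, ht10, mul_ne_zero_iff, ht00, ht11]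

lemma of_anti_mul (t : SL2) (ht00 : (t : Matrix (Fin 2) (Fin 2) F) 0 0 = 0)
    (ht11 : (t : Matrix (Fin 2) (Fin 2) F) 1 1 = 0) (b₁₁ b₁₂ b₂₁ b₂₂ : Bool) :
    of ℚ SL2 t * suppClass ℚ F b₁₁ b₁₂ b₂₁ b₂₂ = suppClass ℚ F b₂₁ b₂₂ b₁₁ b₁₂ := by
  have hd := det_entries t
  rw [ht00, ht11] at hd
  have ht01 : (t : Matrix (Fin 2) (Fin 2) F) 0 1 ≠ 0 := by
    intro h; rw [h] at hd; simp at hd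
  have ht10 : (t : Matrix (Fin 2) (Fin 2) F) 1 0 ≠ 0 := by
    intro h; rw [h] at hd; simp at hd
  apply of_mul_suppClass
  intro g
  rw [mem_fil, mem_fil]
  simp only [mul_entry, ht00, ht11, zero_mul, mul_zero, zero_add, add_zero,
    mul_ne_zero_iff]
  simp [ht01, ht10]
  tauto

lemma suppClass_mul_of (t : SL2) (b₁₁ b₁₂ b₂₁ b₂₂ c₁₁ c₁₂ c₂₁ c₂₂ : Bool)
    (key : ∀ g : SL2, g ∈ (fil b₁₁ b₁₂ b₂₁ b₂₂ : Finset SL2) ↔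
      g * t ∈ (fil c₁₁ c₁₂ c₂₁ c₂₂ : Finset SL2)) :
    suppClass ℚ F b₁₁ b₁₂ b₂₁ b₂₂ * of ℚ SL2 t = suppClass ℚ F c₁₁ c₁₂ c₂₁ c₂₂ := by
  rw [suppClass_eq, suppClass_eq, Finset.sum_mul]
  refine Finset.sum_bij' (fun g _ => g * t) (fun h _ => h * t⁻¹) ?_ ?_ ?_ ?_ ?_
  · intro a ha; exact (key a).mp ha
  · intro a ha
    rw [key]
    simpa using ha
  · intro a ha; group
  · intro a ha; group
  · intro a ha; rw [← map_mul]

lemma anti_mul_of (t : SL2) (ht00 : (t : Matrix (Fin 2) (Fin 2) F) 0 0 = 0)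
    (ht11 : (t : Matrix (Fin 2) (Fin 2) F) 1 1 = 0) (b₁₁ b₁₂ b₂₁ b₂₂ : Bool) :
    suppClass ℚ F b₁₁ b₁₂ b₂₁ b₂₂ * of ℚ SL2 t = suppClass ℚ F b₁₂ b₁₁ b₂₂ b₂₁ := by
  have hd := det_entries t
  rw [ht00, ht11] at hd
  have ht01 : (t : Matrix (Fin 2) (Fin 2) F) 0 1 ≠ 0 := by
    intro h; rw [h] at hd; simp at hd
  have ht10 : (t : Matrix (Fin 2) (Fin 2) F) 1 0 ≠ 0 := by
    intro h; rw [h] at hd; simp at hd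
  apply suppClass_mul_of
  intro g
  rw [mem_fil, mem_fil]
  simp only [mul_entry, ht00, ht11, zero_mul, mul_zero, zero_add, add_zero,
    mul_ne_zero_iff]
  simp [ht01, ht10]
  tauto
lemma card_filA : (fil (F := F) true false false true).card = Fintype.card F - 1 := by
  have h := Finset.card_bij' (s := (Finset.univ.erase (0 : F))) (t := fil (F := F) true false false true)
    (i := fun a ha => (⟨!![a, 0; 0, a⁻¹], by
      have ha' : a ≠ 0 := (Finset.mem_erase.mp ha).1
      simp [Matrix.det_fin_two, ha']⟩ : Matrix.SpecialLinearGroup (Fin 2) F))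
    (j := fun g _ => (g : Matrix (Fin 2) (Fin 2) F) 0 0)
    (hi := fun a ha => by
      have ha' : a ≠ 0 := (Finset.mem_erase.mp ha).1
      apply mem_fil.mpr
      simp [ha'])
    (hj := fun g hg => by
      rw [mem_fil] at hg
      have h00 : (g : Matrix (Fin 2) (Fin 2) F) 0 0 ≠ 0 := hg.1.mp rfl
      simp [h00])
    (by intro a ha; simp)
    (by
      intro g hg
      rw [mem_fil] at hg
      have h01 : (g : Matrix (Fin 2) (Fin 2) F) 0 1 = 0 := by
        have := hg.2.1; simpa using this
      have h10 : (g : Matrix (Fin 2) (Fin 2) F) 1 0 = 0 := by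
        have := hg.2.2.1; simpa using this
      have hd := det_entries g
      rw [h01, h10] at hd
      have h00 : (g : Matrix (Fin 2) (Fin 2) F) 0 0 ≠ 0 := hg.1.mp rfl
      have h11 : (g : Matrix (Fin 2) (Fin 2) F) 1 1 = ((g : Matrix (Fin 2) (Fin 2) F) 0 0)⁻¹ := by
        field_simp
        linear_combination hd
      ext i j
      fin_cases i <;> fin_cases j <;> simp [h01, h10, h11])
  rw [← h, Finset.card_erase_of_mem (Finset.mem_univ _), Finset.card_univ]

lemma card_filB : (fil (F := F) false true true false).card = Fintype.card F - 1 := by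
  have h := Finset.card_bij' (s := (Finset.univ.erase (0 : F))) (t := fil (F := F) false true true false)
    (i := fun a ha => (⟨!![0, a; -a⁻¹, 0], by
      have ha' : a ≠ 0 := (Finset.mem_erase.mp ha).1
      simp [Matrix.det_fin_two, ha']⟩ : Matrix.SpecialLinearGroup (Fin 2) F))
    (j := fun g _ => (g : Matrix (Fin 2) (Fin 2) F) 0 1)
    (hi := fun a ha => by
      have ha' : a ≠ 0 := (Finset.mem_erase.mp ha).1
      apply mem_fil.mpr
      simp [ha'])
    (hj := fun g hg => by
      rw [mem_fil] at hg
      have h01 : (g : Matrix (Fin 2) (Fin 2) F) 0 1 ≠ 0 := hg.2.1.mp rfl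
      simp [h01])
    (by intro a ha; simp)
    (by
      intro g hg
      rw [mem_fil] at hg
      have h00 : (g : Matrix (Fin 2) (Fin 2) F) 0 0 = 0 := by
        have := hg.1; simpa using this
      have h11 : (g : Matrix (Fin 2) (Fin 2) F) 1 1 = 0 := by
        have := hg.2.2.2; simpa using this
      have hd := det_entries g
      rw [h00, h11] at hd
      have h01 : (g : Matrix (Fin 2) (Fin 2) F) 0 1 ≠ 0 := hg.2.1.mp rfl
      have h10 : (g : Matrix (Fin 2) (Fin 2) F) 1 0 = -((g : Matrix (Fin 2) (Fin 2) F) 0 1)⁻¹ := by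
        field_simp
        linear_combination -hd
      ext i j
      fin_cases i <;> fin_cases j <;> simp [h00, h11, h10])
  rw [← h, Finset.card_erase_of_mem (Finset.mem_univ _), Finset.card_univ]
lemma elA_mul (b₁₁ b₁₂ b₂₁ b₂₂ : Bool) :
    elA ℚ F * suppClass ℚ F b₁₁ b₁₂ b₂₁ b₂₂ =
      (Fintype.card F - 1 : ℕ) • suppClass ℚ F b₁₁ b₁₂ b₂₁ b₂₂ := by
  rw [show elA ℚ F = ∑ t ∈ fil (F := F) true false false true, of ℚ SL2 t from rfl,
    Finset.sum_mul]
  rw [Finset.sum_congr rfl (fun t ht => ?_), Finset.sum_const, card_filA]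
  have ht01 : (t : Matrix (Fin 2) (Fin 2) F) 0 1 = 0 := by
    have := (mem_fil.mp ht).2.1; simpa using this
  have ht10 : (t : Matrix (Fin 2) (Fin 2) F) 1 0 = 0 := by
    have := (mem_fil.mp ht).2.2.1; simpa using this
  exact of_diag_mul t ht01 ht10 b₁₁ b₁₂ b₂₁ b₂₂

lemma elB_mul (b₁₁ b₁₂ b₂₁ b₂₂ : Bool) :
    elB ℚ F * suppClass ℚ F b₁₁ b₁₂ b₂₁ b₂₂ =
      (Fintype.card F - 1 : ℕ) • suppClass ℚ F b₂₁ b₂₂ b₁₁ b₁₂ := by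
  rw [show elB ℚ F = ∑ t ∈ fil (F := F) false true true false, of ℚ SL2 t from rfl,
    Finset.sum_mul]
  rw [Finset.sum_congr rfl (fun t ht => ?_), Finset.sum_const, card_filB]
  have ht00 : (t : Matrix (Fin 2) (Fin 2) F) 0 0 = 0 := by
    have := (mem_fil.mp ht).1; simpa using this
  have ht11 : (t : Matrix (Fin 2) (Fin 2) F) 1 1 = 0 := by
    have := (mem_fil.mp ht).2.2.2; simpa using this
  exact of_anti_mul t ht00 ht11 b₁₁ b₁₂ b₂₁ b₂₂
attribute [local instance 10] Classical.propDecidable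

noncomputable def uu (x : F) : Matrix.SpecialLinearGroup (Fin 2) F :=
  ⟨!![1, x; 0, 1], by simp [Matrix.det_fin_two]⟩

@[simp] lemma uu_coe (x : F) (i j : Fin 2) :
    ((uu x : SL2) : Matrix (Fin 2) (Fin 2) F) i j = !![1, x; 0, 1] i j := rfl

lemma uu_mul (x y : F) : (uu x : SL2) * uu y = uu (x + y) := by
  ext i j
  rw [mul_entry]
  fin_cases i <;> fin_cases j <;> simp <;> ring

lemma uu_zero : (uu 0 : SL2) = 1 := by
  ext i j
  fin_cases i <;> fin_cases j <;> simp [uu_coe]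

lemma uu_inv (x : F) : (uu x : SL2)⁻¹ = uu (-x) := by
  apply inv_eq_of_mul_eq_one_right
  rw [uu_mul]
  simp [uu_zero]

noncomputable def NN : MonoidAlgebra ℚ (Matrix.SpecialLinearGroup (Fin 2) F) :=
  ∑ x : F, of ℚ (Matrix.SpecialLinearGroup (Fin 2) F) (uu x)

noncomputable def botfil (c d : Bool) : Finset (Matrix.SpecialLinearGroup (Fin 2) F) :=
  Finset.univ.filter
    (fun h : Matrix.SpecialLinearGroup (Fin 2) F =>
      (c = true ↔ (h : Matrix (Fin 2) (Fin 2) F) 1 0 ≠ 0) ∧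
      (d = true ↔ (h : Matrix (Fin 2) (Fin 2) F) 1 1 ≠ 0))

lemma mem_botfil {c d : Bool} {h : SL2} :
    h ∈ (botfil c d : Finset SL2) ↔
      ((c = true ↔ (h : Matrix (Fin 2) (Fin 2) F) 1 0 ≠ 0) ∧
       (d = true ↔ (h : Matrix (Fin 2) (Fin 2) F) 1 1 ≠ 0)) := by
  simp [botfil]

noncomputable def botS (c d : Bool) : MonoidAlgebra ℚ (Matrix.SpecialLinearGroup (Fin 2) F) :=
  ∑ h ∈ (botfil c d : Finset SL2), of ℚ SL2 h

lemma uu_mul_bot (x : F) (g : SL2) (j : Fin 2) :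
    ((uu x * g : SL2) : Matrix (Fin 2) (Fin 2) F) 1 j = (g : Matrix (Fin 2) (Fin 2) F) 1 j := by
  rw [mul_entry]; simp

lemma NN_mul (b₁₁ b₁₂ b₂₁ b₂₂ : Bool) (m : ℕ)
    (hcount : ∀ h ∈ (botfil b₂₁ b₂₂ : Finset SL2),
      (Finset.univ.filter fun x : F => uu (-x) * h ∈ (fil b₁₁ b₁₂ b₂₁ b₂₂ : Finset SL2)).card = m) :
    NN * suppClass ℚ F b₁₁ b₁₂ b₂₁ b₂₂ = m • botS b₂₁ b₂₂ := by
  rw [NN, suppClass_eq, Finset.sum_mul_sum]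
  have key : ∀ p ∈ (Finset.univ ×ˢ fil b₁₁ b₁₂ b₂₁ b₂₂ : Finset (F × SL2)),
      (uu p.1 * p.2 : SL2) ∈ (botfil b₂₁ b₂₂ : Finset SL2) := by
    rintro ⟨x, g⟩ hp
    rw [Finset.mem_product] at hp
    have hg := mem_fil.mp hp.2
    rw [mem_botfil]
    rw [uu_mul_bot, uu_mul_bot]
    exact ⟨hg.2.2.1, hg.2.2.2⟩
  calc (∑ x : F, ∑ g ∈ fil b₁₁ b₁₂ b₂₁ b₂₂, of ℚ SL2 (uu x) * of ℚ SL2 g)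
      = ∑ p ∈ (Finset.univ ×ˢ fil b₁₁ b₁₂ b₂₁ b₂₂ : Finset (F × SL2)),
          of ℚ SL2 (uu p.1 * p.2) := by
        rw [Finset.sum_product]
        exact Finset.sum_congr rfl fun x _ => Finset.sum_congr rfl fun g _ => (map_mul _ _ _).symm
    _ = ∑ h ∈ (botfil b₂₁ b₂₂ : Finset SL2),
          ∑ p ∈ (Finset.univ ×ˢ fil b₁₁ b₁₂ b₂₁ b₂₂ : Finset (F × SL2)).filter
            (fun p => uu p.1 * p.2 = h), of ℚ SL2 (uu p.1 * p.2) :=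
        (Finset.sum_fiberwise_of_maps_to key _).symm
    _ = ∑ h ∈ (botfil b₂₁ b₂₂ : Finset SL2),
          ((Finset.univ ×ˢ fil b₁₁ b₁₂ b₂₁ b₂₂ : Finset (F × SL2)).filter
            (fun p => uu p.1 * p.2 = h)).card • of ℚ SL2 h := by
        refine Finset.sum_congr rfl fun h hh => ?_
        rw [Finset.sum_congr rfl (fun p hp => ?_), Finset.sum_const]
        rw [Finset.mem_filter] at hp
        rw [hp.2]
    _ = ∑ h ∈ (botfil b₂₁ b₂₂ : Finset SL2), m • of ℚ SL2 h := by
        refine Finset.sum_congr rfl fun h hh => ?_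
        congr 1
        rw [← hcount h hh]
        refine Finset.card_bij' (fun p _ => p.1) (fun x hx => (x, uu (-x) * h)) ?_ ?_ ?_ ?_
        · rintro ⟨x, g⟩ hp
          rw [Finset.mem_filter, Finset.mem_product] at hp
          have hg : g = uu (-x) * h := by
            rw [← hp.2, ← mul_assoc, uu_mul]
            simp [uu_zero]
          rw [Finset.mem_filter]
          exact ⟨Finset.mem_univ _, hg ▸ hp.1.2⟩
        · intro x hx
          rw [Finset.mem_filter] at hx
          rw [Finset.mem_filter, Finset.mem_product]
          refine ⟨⟨Finset.mem_univ _, hx.2⟩, ?_⟩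
          rw [← mul_assoc, uu_mul]
          simp [uu_zero]
        · rintro ⟨x, g⟩ hp
          rw [Finset.mem_filter, Finset.mem_product] at hp
          have hg : g = uu (-x) * h := by
            rw [← hp.2, ← mul_assoc, uu_mul]
            simp [uu_zero]
          simp [← hg]
        · intro x hx; rfl
    _ = m • botS b₂₁ b₂₂ := by rw [botS, Finset.smul_sum]
lemma uuneg_e00 (x : F) (h : SL2) :
    ((uu (-x) * h : SL2) : Matrix (Fin 2) (Fin 2) F) 0 0 =
      (h : Matrix (Fin 2) (Fin 2) F) 0 0 - x * (h : Matrix (Fin 2) (Fin 2) F) 1 0 := by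
  rw [mul_entry]; simp; ring

lemma uuneg_e01 (x : F) (h : SL2) :
    ((uu (-x) * h : SL2) : Matrix (Fin 2) (Fin 2) F) 0 1 =
      (h : Matrix (Fin 2) (Fin 2) F) 0 1 - x * (h : Matrix (Fin 2) (Fin 2) F) 1 1 := by
  rw [mul_entry]; simp; ring

lemma countA : ∀ h ∈ (botfil false true : Finset SL2),
    (Finset.univ.filter fun x : F => uu (-x) * h ∈ (fil true false false true : Finset SL2)).card
      = 1 := by
  intro h hh
  rw [mem_botfil] at hh
  have h10 : (h : Matrix (Fin 2) (Fin 2) F) 1 0 = 0 := by have := hh.1; simpa using this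
  have h11 : (h : Matrix (Fin 2) (Fin 2) F) 1 1 ≠ 0 := hh.2.mp rfl
  have hd := det_entries h
  have h00 : (h : Matrix (Fin 2) (Fin 2) F) 0 0 ≠ 0 := by
    intro h0; rw [h0, h10] at hd; simp at hd
  have : (Finset.univ.filter fun x : F =>
      uu (-x) * h ∈ (fil true false false true : Finset SL2)) =
      {(h : Matrix (Fin 2) (Fin 2) F) 0 1 * ((h : Matrix (Fin 2) (Fin 2) F) 1 1)⁻¹} := by
    ext x
    simp only [Finset.mem_filter, Finset.mem_univ, true_and, mem_fil, uuneg_e00, uuneg_e01,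
      uu_mul_bot, h10, mul_zero, sub_zero, Finset.mem_singleton]
    simp only [h00, h11, not_true_eq_false, iff_true, Bool.false_eq_true, false_iff,
      not_not, ne_eq, not_false_eq_true, true_and, and_true, iff_false]
    rw [sub_eq_zero]
    field_simp
    rw [eq_comm, mul_comm]
  rw [this, Finset.card_singleton]

lemma countDp : ∀ h ∈ (botfil false true : Finset SL2),
    (Finset.univ.filter fun x : F => uu (-x) * h ∈ (fil true true false true : Finset SL2)).card
      = Fintype.card F - 1 := by
  intro h hh
  rw [mem_botfil] at hh
  have h10 : (h : Matrix (Fin 2) (Fin 2) F) 1 0 = 0 := by have := hh.1; simpa using this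
  have h11 : (h : Matrix (Fin 2) (Fin 2) F) 1 1 ≠ 0 := hh.2.mp rfl
  have hd := det_entries h
  have h00 : (h : Matrix (Fin 2) (Fin 2) F) 0 0 ≠ 0 := by
    intro h0; rw [h0, h10] at hd; simp at hd
  have : (Finset.univ.filter fun x : F =>
      uu (-x) * h ∈ (fil true true false true : Finset SL2)) =
      Finset.univ.erase ((h : Matrix (Fin 2) (Fin 2) F) 0 1 * ((h : Matrix (Fin 2) (Fin 2) F) 1 1)⁻¹) := by
    ext x
    simp only [Finset.mem_filter, Finset.mem_univ, true_and, mem_fil, uuneg_e00, uuneg_e01,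
      uu_mul_bot, h10, mul_zero, sub_zero, Finset.mem_erase, and_true]
    simp only [h00, h11, not_true_eq_false, iff_true, Bool.false_eq_true, false_iff,
      not_not, ne_eq, not_false_eq_true, true_and, and_true, iff_false]
    simp only [true_iff]
    rw [not_iff_not, sub_eq_zero]
    field_simp
    rw [eq_comm, mul_comm]
  rw [this, Finset.card_erase_of_mem (Finset.mem_univ _), Finset.card_univ]
lemma countB : ∀ h ∈ (botfil true false : Finset SL2),
    (Finset.univ.filter fun x : F => uu (-x) * h ∈ (fil false true true false : Finset SL2)).card
      = 1 := by
  intro h hh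
  rw [mem_botfil] at hh
  have h11 : (h : Matrix (Fin 2) (Fin 2) F) 1 1 = 0 := by have := hh.2; simpa using this
  have h10 : (h : Matrix (Fin 2) (Fin 2) F) 1 0 ≠ 0 := hh.1.mp rfl
  have hd := det_entries h
  have h01 : (h : Matrix (Fin 2) (Fin 2) F) 0 1 ≠ 0 := by
    intro h0; rw [h0, h11] at hd; simp at hd
  have : (Finset.univ.filter fun x : F =>
      uu (-x) * h ∈ (fil false true true false : Finset SL2)) =
      {(h : Matrix (Fin 2) (Fin 2) F) 0 0 * ((h : Matrix (Fin 2) (Fin 2) F) 1 0)⁻¹} := by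
    ext x
    simp only [Finset.mem_filter, Finset.mem_univ, true_and, mem_fil, uuneg_e00, uuneg_e01,
      uu_mul_bot, h11, mul_zero, sub_zero, Finset.mem_singleton]
    simp only [h01, h10, not_true_eq_false, iff_true, Bool.false_eq_true, false_iff,
      not_not, ne_eq, not_false_eq_true, true_and, and_true, iff_false]
    rw [sub_eq_zero]
    field_simp
    rw [eq_comm, mul_comm]
  rw [this, Finset.card_singleton]

lemma countEp : ∀ h ∈ (botfil true false : Finset SL2),
    (Finset.univ.filter fun x : F => uu (-x) * h ∈ (fil true true true false : Finset SL2)).card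
      = Fintype.card F - 1 := by
  intro h hh
  rw [mem_botfil] at hh
  have h11 : (h : Matrix (Fin 2) (Fin 2) F) 1 1 = 0 := by have := hh.2; simpa using this
  have h10 : (h : Matrix (Fin 2) (Fin 2) F) 1 0 ≠ 0 := hh.1.mp rfl
  have hd := det_entries h
  have h01 : (h : Matrix (Fin 2) (Fin 2) F) 0 1 ≠ 0 := by
    intro h0; rw [h0, h11] at hd; simp at hd
  have : (Finset.univ.filter fun x : F =>
      uu (-x) * h ∈ (fil true true true false : Finset SL2)) =
      Finset.univ.erase ((h : Matrix (Fin 2) (Fin 2) F) 0 0 * ((h : Matrix (Fin 2) (Fin 2) F) 1 0)⁻¹) := by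
    ext x
    simp only [Finset.mem_filter, Finset.mem_univ, true_and, mem_fil, uuneg_e00, uuneg_e01,
      uu_mul_bot, h11, mul_zero, sub_zero, Finset.mem_erase, and_true]
    simp only [h01, h10, not_true_eq_false, iff_true, Bool.false_eq_true, false_iff,
      not_not, ne_eq, not_false_eq_true, true_and, and_true, iff_false]
    simp only [true_iff]
    rw [not_iff_not, sub_eq_zero]
    field_simp
    rw [eq_comm, mul_comm]
  rw [this, Finset.card_erase_of_mem (Finset.mem_univ _), Finset.card_univ]

lemma countDm : ∀ h ∈ (botfil true true : Finset SL2),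
    (Finset.univ.filter fun x : F => uu (-x) * h ∈ (fil true false true true : Finset SL2)).card
      = 1 := by
  intro h hh
  rw [mem_botfil] at hh
  have h10 : (h : Matrix (Fin 2) (Fin 2) F) 1 0 ≠ 0 := hh.1.mp rfl
  have h11 : (h : Matrix (Fin 2) (Fin 2) F) 1 1 ≠ 0 := hh.2.mp rfl
  have hd := det_entries h
  have : (Finset.univ.filter fun x : F =>
      uu (-x) * h ∈ (fil true false true true : Finset SL2)) =
      {(h : Matrix (Fin 2) (Fin 2) F) 0 1 * ((h : Matrix (Fin 2) (Fin 2) F) 1 1)⁻¹} := by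
    ext x
    simp only [Finset.mem_filter, Finset.mem_univ, true_and, mem_fil, uuneg_e00, uuneg_e01,
      uu_mul_bot, Finset.mem_singleton]
    simp only [h10, h11, not_true_eq_false, iff_true, Bool.false_eq_true, false_iff,
      not_not, ne_eq, not_false_eq_true, true_and, and_true, iff_false, true_iff]
    constructor
    · rintro ⟨-, h2⟩
      rw [sub_eq_zero] at h2
      rw [h2]; field_simp
    · rintro rfl
      refine ⟨?_, by field_simp; ring⟩
      intro e
      rw [sub_eq_zero] at e
      field_simp at e
      rw [e] at hd
      simp at hd
  rw [this, Finset.card_singleton]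

lemma countEm : ∀ h ∈ (botfil true true : Finset SL2),
    (Finset.univ.filter fun x : F => uu (-x) * h ∈ (fil false true true true : Finset SL2)).card
      = 1 := by
  intro h hh
  rw [mem_botfil] at hh
  have h10 : (h : Matrix (Fin 2) (Fin 2) F) 1 0 ≠ 0 := hh.1.mp rfl
  have h11 : (h : Matrix (Fin 2) (Fin 2) F) 1 1 ≠ 0 := hh.2.mp rfl
  have hd := det_entries h
  have : (Finset.univ.filter fun x : F =>
      uu (-x) * h ∈ (fil false true true true : Finset SL2)) =
      {(h : Matrix (Fin 2) (Fin 2) F) 0 0 * ((h : Matrix (Fin 2) (Fin 2) F) 1 0)⁻¹} := by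
    ext x
    simp only [Finset.mem_filter, Finset.mem_univ, true_and, mem_fil, uuneg_e00, uuneg_e01,
      uu_mul_bot, Finset.mem_singleton]
    simp only [h10, h11, not_true_eq_false, iff_true, Bool.false_eq_true, false_iff,
      not_not, ne_eq, not_false_eq_true, true_and, and_true, iff_false, true_iff]
    constructor
    · rintro ⟨h2, -⟩
      rw [sub_eq_zero] at h2
      rw [h2]; field_simp
    · rintro rfl
      refine ⟨by field_simp; ring, ?_⟩
      intro e
      rw [sub_eq_zero] at e
      field_simp at e
      rw [e] at hd
      simp at hd
  rw [this, Finset.card_singleton]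

lemma countC : ∀ h ∈ (botfil true true : Finset SL2),
    (Finset.univ.filter fun x : F => uu (-x) * h ∈ (fil true true true true : Finset SL2)).card
      = Fintype.card F - 2 := by
  intro h hh
  rw [mem_botfil] at hh
  have h10 : (h : Matrix (Fin 2) (Fin 2) F) 1 0 ≠ 0 := hh.1.mp rfl
  have h11 : (h : Matrix (Fin 2) (Fin 2) F) 1 1 ≠ 0 := hh.2.mp rfl
  have hd := det_entries h
  have hne : (h : Matrix (Fin 2) (Fin 2) F) 0 0 * ((h : Matrix (Fin 2) (Fin 2) F) 1 0)⁻¹ ≠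
      (h : Matrix (Fin 2) (Fin 2) F) 0 1 * ((h : Matrix (Fin 2) (Fin 2) F) 1 1)⁻¹ := by
    intro e
    field_simp at e
    rw [e] at hd
    exact absurd (by linear_combination -hd : (1:F) = 0) one_ne_zero
  have : (Finset.univ.filter fun x : F =>
      uu (-x) * h ∈ (fil true true true true : Finset SL2)) =
      (Finset.univ.erase ((h : Matrix (Fin 2) (Fin 2) F) 0 1 * ((h : Matrix (Fin 2) (Fin 2) F) 1 1)⁻¹)).erase
        ((h : Matrix (Fin 2) (Fin 2) F) 0 0 * ((h : Matrix (Fin 2) (Fin 2) F) 1 0)⁻¹) := by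
    ext x
    simp only [Finset.mem_filter, Finset.mem_univ, true_and, mem_fil, uuneg_e00, uuneg_e01,
      uu_mul_bot, Finset.mem_erase, and_true]
    simp only [h10, h11, not_true_eq_false, iff_true, Bool.false_eq_true, false_iff,
      not_not, ne_eq, not_false_eq_true, true_and, and_true, iff_false, true_iff]
    constructor
    · rintro ⟨h1, h2⟩
      refine ⟨fun e => h1 ?_, fun e => h2 ?_⟩
      · rw [e]; field_simp; ring
      · rw [e]; field_simp; ring
    · rintro ⟨e1, e2⟩
      refine ⟨fun e => e1 ?_, fun e => e2 ?_⟩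
      · rw [sub_eq_zero] at e; rw [e]; field_simp
      · rw [sub_eq_zero] at e; rw [e]; field_simp
  rw [this, Finset.card_erase_of_mem, Finset.card_erase_of_mem (Finset.mem_univ _),
    Finset.card_univ]
  · omega
  · exact Finset.mem_erase.mpr ⟨hne, Finset.mem_univ _⟩
lemma botS_FT : (botS false true : MonoidAlgebra ℚ SL2) = elA ℚ F + elDp ℚ F := by
  have e1 : ((botfil false true : Finset SL2).filter
      (fun h : SL2 => ((h : SL2) : Matrix (Fin 2) (Fin 2) F) 0 1 = 0)) = fil true false false true := by
    ext h
    simp only [Finset.mem_filter, mem_botfil, mem_fil]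
    constructor
    · rintro ⟨⟨hb1, hb2⟩, h01⟩
      have h10 : (h : Matrix (Fin 2) (Fin 2) F) 1 0 = 0 := by simpa using hb1
      have hd := det_entries h
      rw [h01, h10] at hd
      have h00 : (h : Matrix (Fin 2) (Fin 2) F) 0 0 ≠ 0 := by
        intro z; rw [z] at hd; simp at hd
      exact ⟨by simp [h00], by simp [h01], hb1, hb2⟩
    · rintro ⟨c1, c2, c3, c4⟩
      exact ⟨⟨c3, c4⟩, by simpa using c2⟩
  have e2 : ((botfil false true : Finset SL2).filter
      (fun h : SL2 => ¬ ((h : SL2) : Matrix (Fin 2) (Fin 2) F) 0 1 = 0)) = fil true true false true := by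
    ext h
    simp only [Finset.mem_filter, mem_botfil, mem_fil]
    constructor
    · rintro ⟨⟨hb1, hb2⟩, h01⟩
      have h10 : (h : Matrix (Fin 2) (Fin 2) F) 1 0 = 0 := by simpa using hb1
      have hd := det_entries h
      rw [h10] at hd
      have h00 : (h : Matrix (Fin 2) (Fin 2) F) 0 0 ≠ 0 := by
        intro z; rw [z] at hd; simp at hd
      exact ⟨by simp [h00], by simp [h01], hb1, hb2⟩
    · rintro ⟨c1, c2, c3, c4⟩
      exact ⟨⟨c3, c4⟩, by simpa using c2⟩
  rw [botS, ← Finset.sum_filter_add_sum_filter_not (botfil false true)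
    (fun h : SL2 => ((h : SL2) : Matrix (Fin 2) (Fin 2) F) 0 1 = 0), e1, e2]
  rfl

lemma botS_TF : (botS true false : MonoidAlgebra ℚ SL2) = elB ℚ F + elEp ℚ F := by
  have e1 : ((botfil true false : Finset SL2).filter
      (fun h : SL2 => ((h : SL2) : Matrix (Fin 2) (Fin 2) F) 0 0 = 0)) = fil false true true false := by
    ext h
    simp only [Finset.mem_filter, mem_botfil, mem_fil]
    constructor
    · rintro ⟨⟨hb1, hb2⟩, h00⟩
      have h11 : (h : Matrix (Fin 2) (Fin 2) F) 1 1 = 0 := by simpa using hb2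
      have hd := det_entries h
      rw [h00, h11] at hd
      have h01 : (h : Matrix (Fin 2) (Fin 2) F) 0 1 ≠ 0 := by
        intro z; rw [z] at hd; simp at hd
      exact ⟨by simp [h00], by simp [h01], hb1, hb2⟩
    · rintro ⟨c1, c2, c3, c4⟩
      exact ⟨⟨c3, c4⟩, by simpa using c1⟩
  have e2 : ((botfil true false : Finset SL2).filter
      (fun h : SL2 => ¬ ((h : SL2) : Matrix (Fin 2) (Fin 2) F) 0 0 = 0)) = fil true true true false := by
    ext h
    simp only [Finset.mem_filter, mem_botfil, mem_fil]
    constructor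
    · rintro ⟨⟨hb1, hb2⟩, h00⟩
      have h11 : (h : Matrix (Fin 2) (Fin 2) F) 1 1 = 0 := by simpa using hb2
      have hd := det_entries h
      rw [h11] at hd
      have h01 : (h : Matrix (Fin 2) (Fin 2) F) 0 1 ≠ 0 := by
        intro z; rw [z] at hd; simp at hd
      exact ⟨by simp [h00], by simp [h01], hb1, hb2⟩
    · rintro ⟨c1, c2, c3, c4⟩
      exact ⟨⟨c3, c4⟩, by simpa using c1⟩
  rw [botS, ← Finset.sum_filter_add_sum_filter_not (botfil true false)
    (fun h : SL2 => ((h : SL2) : Matrix (Fin 2) (Fin 2) F) 0 0 = 0), e1, e2]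
  rfl

lemma botS_TT : (botS true true : MonoidAlgebra ℚ SL2) = elDm ℚ F + elEm ℚ F + elC ℚ F := by
  have e1 : ((botfil true true : Finset SL2).filter
      (fun h : SL2 => ((h : SL2) : Matrix (Fin 2) (Fin 2) F) 0 1 = 0)) = fil true false true true := by
    ext h
    simp only [Finset.mem_filter, mem_botfil, mem_fil]
    constructor
    · rintro ⟨⟨hb1, hb2⟩, h01⟩
      have hd := det_entries h
      rw [h01] at hd
      have h00 : (h : Matrix (Fin 2) (Fin 2) F) 0 0 ≠ 0 := by
        intro z; rw [z] at hd; simp at hd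
      exact ⟨by simp [h00], by simp [h01], hb1, hb2⟩
    · rintro ⟨c1, c2, c3, c4⟩
      exact ⟨⟨c3, c4⟩, by simpa using c2⟩
  have e2 : (((botfil true true : Finset SL2).filter
      (fun h : SL2 => ¬ ((h : SL2) : Matrix (Fin 2) (Fin 2) F) 0 1 = 0)).filter
      (fun h : SL2 => ((h : SL2) : Matrix (Fin 2) (Fin 2) F) 0 0 = 0)) = fil false true true true := by
    ext h
    simp only [Finset.mem_filter, mem_botfil, mem_fil]
    constructor
    · rintro ⟨⟨⟨hb1, hb2⟩, h01⟩, h00⟩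
      exact ⟨by simp [h00], by simp [h01], hb1, hb2⟩
    · rintro ⟨c1, c2, c3, c4⟩
      exact ⟨⟨⟨c3, c4⟩, by simpa using c2⟩, by simpa using c1⟩
  have e3 : (((botfil true true : Finset SL2).filter
      (fun h : SL2 => ¬ ((h : SL2) : Matrix (Fin 2) (Fin 2) F) 0 1 = 0)).filter
      (fun h : SL2 => ¬ ((h : SL2) : Matrix (Fin 2) (Fin 2) F) 0 0 = 0)) = fil true true true true := by
    ext h
    simp only [Finset.mem_filter, mem_botfil, mem_fil]
    constructor
    · rintro ⟨⟨⟨hb1, hb2⟩, h01⟩, h00⟩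
      exact ⟨by simp [h00], by simp [h01], hb1, hb2⟩
    · rintro ⟨c1, c2, c3, c4⟩
      exact ⟨⟨⟨c3, c4⟩, by simpa using c2⟩, by simpa using c1⟩
  rw [botS, ← Finset.sum_filter_add_sum_filter_not (botfil true true)
    (fun h : SL2 => ((h : SL2) : Matrix (Fin 2) (Fin 2) F) 0 1 = 0), e1,
    ← Finset.sum_filter_add_sum_filter_not ((botfil true true : Finset SL2).filter
      (fun h : SL2 => ¬ ((h : SL2) : Matrix (Fin 2) (Fin 2) F) 0 1 = 0))
      (fun h : SL2 => ((h : SL2) : Matrix (Fin 2) (Fin 2) F) 0 0 = 0), e2, e3, ← add_assoc]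
  rfl
noncomputable def ww : Matrix.SpecialLinearGroup (Fin 2) F :=
  ⟨!![0, 1; -1, 0], by simp [Matrix.det_fin_two]⟩

noncomputable def ww' : Matrix.SpecialLinearGroup (Fin 2) F :=
  ⟨!![0, -1; 1, 0], by simp [Matrix.det_fin_two]⟩

lemma ww00 : ((ww : SL2) : Matrix (Fin 2) (Fin 2) F) 0 0 = 0 := rfl
lemma ww11 : ((ww : SL2) : Matrix (Fin 2) (Fin 2) F) 1 1 = 0 := rfl
lemma ww'00 : ((ww' : SL2) : Matrix (Fin 2) (Fin 2) F) 0 0 = 0 := rfl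
lemma ww'11 : ((ww' : SL2) : Matrix (Fin 2) (Fin 2) F) 1 1 = 0 := rfl

lemma NN_elA : (NN : MonoidAlgebra ℚ SL2) * elA ℚ F = botS false true := by
  rw [elA]
  simpa using NN_mul true false false true 1 countA

lemma NN_elB : (NN : MonoidAlgebra ℚ SL2) * elB ℚ F = botS true false := by
  rw [elB]
  simpa using NN_mul false true true false 1 countB

lemma NN_elDm : (NN : MonoidAlgebra ℚ SL2) * elDm ℚ F = botS true true := by
  rw [elDm]
  simpa using NN_mul true false true true 1 countDm

lemma NN_elEm : (NN : MonoidAlgebra ℚ SL2) * elEm ℚ F = botS true true := by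
  rw [elEm]
  simpa using NN_mul false true true true 1 countEm

lemma NN_elDp : (NN : MonoidAlgebra ℚ SL2) * elDp ℚ F = (Fintype.card F - 1) • botS false true := by
  rw [elDp]
  exact NN_mul true true false true _ countDp

lemma NN_elEp : (NN : MonoidAlgebra ℚ SL2) * elEp ℚ F = (Fintype.card F - 1) • botS true false := by
  rw [elEp]
  exact NN_mul true true true false _ countEp

lemma NN_elC : (NN : MonoidAlgebra ℚ SL2) * elC ℚ F = (Fintype.card F - 2) • botS true true := by
  rw [elC]
  exact NN_mul true true true true _ countC

end Pi2Aux


open Pi2Aux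

theorem pi2_character (F : Type*) [Field F] [Fintype F] [DecidableEq F]
    (hq : 2 < Fintype.card F) (q : ℚ) (hqc : q = Fintype.card F)
    (π₂ : MonoidAlgebra ℚ (Matrix.SpecialLinearGroup (Fin 2) F))
    (hπ₂ : π₂ = ((q - 2) / (2 * (q ^ 2 - q))) • (elA ℚ F + elB ℚ F) +
      (q * (q - 1) ^ 2)⁻¹ • elC ℚ F -
      ((q - 2) / (2 * q * (q - 1) ^ 2)) • (elDp ℚ F + elDm ℚ F + elEp ℚ F + elEm ℚ F)) :
    elA ℚ F * π₂ = (q - 1) • π₂ ∧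
    elB ℚ F * π₂ = (q - 1) • π₂ ∧
    elC ℚ F * π₂ = (2 * (q - 1)) • π₂ ∧
    elDp ℚ F * π₂ = (1 - q) • π₂ ∧
    elDm ℚ F * π₂ = (1 - q) • π₂ ∧
    elEp ℚ F * π₂ = (1 - q) • π₂ ∧
    elEm ℚ F * π₂ = (1 - q) • π₂ := by
  have hq3 : (3 : ℚ) ≤ q := by rw [hqc]; exact_mod_cast hq
  have hq0 : q ≠ 0 := by intro h; linarith
  have hq1 : q - 1 ≠ 0 := by intro h; linarith
  have hqq2 : 2 * q ^ 2 - 2 * q ≠ 0 := by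
    intro h
    have h' : q * (q - 1) = 0 := by linarith
    rcases mul_eq_zero.mp h' with h'' | h'' <;> [exact hq0 h''; exact hq1 h'']
  have hqq : q ^ 2 - q ≠ 0 := by
    have : q ^ 2 - q = q * (q - 1) := by ring
    rw [this]; exact mul_ne_zero hq0 hq1
  have hc1 : ((Fintype.card F - 1 : ℕ) : ℚ) = q - 1 := by
    have h1 : 1 ≤ Fintype.card F := by omega
    rw [Nat.cast_sub h1, hqc]; norm_num
  have hc2 : ((Fintype.card F - 2 : ℕ) : ℚ) = q - 2 := by
    have h1 : 2 ≤ Fintype.card F := by omega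
    rw [Nat.cast_sub h1, hqc]; norm_num
  -- elA products
  have hA : ∀ b₁ b₂ b₃ b₄ : Bool, elA ℚ F * suppClass ℚ F b₁ b₂ b₃ b₄ =
      (q - 1) • suppClass ℚ F b₁ b₂ b₃ b₄ := by
    intro b₁ b₂ b₃ b₄
    rw [elA_mul, ← Nat.cast_smul_eq_nsmul ℚ, hc1]
  have hB : ∀ b₁ b₂ b₃ b₄ : Bool, elB ℚ F * suppClass ℚ F b₁ b₂ b₃ b₄ =
      (q - 1) • suppClass ℚ F b₃ b₄ b₁ b₂ := by
    intro b₁ b₂ b₃ b₄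
    rw [elB_mul, ← Nat.cast_smul_eq_nsmul ℚ, hc1]
  have hApi : elA ℚ F * π₂ = (q - 1) • π₂ := by
    have a1 : elA ℚ F * elA ℚ F = (q - 1) • elA ℚ F := hA _ _ _ _
    have a2 : elA ℚ F * elB ℚ F = (q - 1) • elB ℚ F := hA _ _ _ _
    have a3 : elA ℚ F * elC ℚ F = (q - 1) • elC ℚ F := hA _ _ _ _
    have a4 : elA ℚ F * elDp ℚ F = (q - 1) • elDp ℚ F := hA _ _ _ _
    have a5 : elA ℚ F * elDm ℚ F = (q - 1) • elDm ℚ F := hA _ _ _ _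
    have a6 : elA ℚ F * elEp ℚ F = (q - 1) • elEp ℚ F := hA _ _ _ _
    have a7 : elA ℚ F * elEm ℚ F = (q - 1) • elEm ℚ F := hA _ _ _ _
    rw [hπ₂]
    simp only [mul_add, mul_sub, mul_smul_comm, a1, a2, a3, a4, a5, a6, a7]
    module
  have hBpi : elB ℚ F * π₂ = (q - 1) • π₂ := by
    have a1 : elB ℚ F * elA ℚ F = (q - 1) • elB ℚ F := hB _ _ _ _
    have a2 : elB ℚ F * elB ℚ F = (q - 1) • elA ℚ F := hB _ _ _ _
    have a3 : elB ℚ F * elC ℚ F = (q - 1) • elC ℚ F := hB _ _ _ _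
    have a4 : elB ℚ F * elDp ℚ F = (q - 1) • elEm ℚ F := hB _ _ _ _
    have a5 : elB ℚ F * elDm ℚ F = (q - 1) • elEp ℚ F := hB _ _ _ _
    have a6 : elB ℚ F * elEp ℚ F = (q - 1) • elDm ℚ F := hB _ _ _ _
    have a7 : elB ℚ F * elEm ℚ F = (q - 1) • elDp ℚ F := hB _ _ _ _
    rw [hπ₂]
    simp only [mul_add, mul_sub, mul_smul_comm, a1, a2, a3, a4, a5, a6, a7]
    module
  -- the unipotent sum kills π₂
  have hNpi : (NN : MonoidAlgebra ℚ (Matrix.SpecialLinearGroup (Fin 2) F)) * π₂ = 0 := by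
    have n4 : (NN : MonoidAlgebra ℚ (Matrix.SpecialLinearGroup (Fin 2) F)) * elDp ℚ F =
        (q - 1) • botS false true := by
      rw [NN_elDp, ← Nat.cast_smul_eq_nsmul ℚ, hc1]
    have n6 : (NN : MonoidAlgebra ℚ (Matrix.SpecialLinearGroup (Fin 2) F)) * elEp ℚ F =
        (q - 1) • botS true false := by
      rw [NN_elEp, ← Nat.cast_smul_eq_nsmul ℚ, hc1]
    have n3 : (NN : MonoidAlgebra ℚ (Matrix.SpecialLinearGroup (Fin 2) F)) * elC ℚ F =
        (q - 2) • botS true true := by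
      rw [NN_elC, ← Nat.cast_smul_eq_nsmul ℚ, hc2]
    rw [hπ₂]
    simp only [mul_add, mul_sub, mul_smul_comm, NN_elA, NN_elB, NN_elDm, NN_elEm, n3, n4, n6]
    match_scalars
    · field_simp [hqq2]
      ring
    · field_simp [hqq2]
      ring
    · field_simp [hqq2]
      ring
  -- w fixes π₂
  have hwpi : of ℚ (Matrix.SpecialLinearGroup (Fin 2) F) ww * π₂ = π₂ := by
    have a1 : of ℚ (Matrix.SpecialLinearGroup (Fin 2) F) ww * elA ℚ F = elB ℚ F :=
      of_anti_mul ww ww00 ww11 true false false true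
    have a2 : of ℚ (Matrix.SpecialLinearGroup (Fin 2) F) ww * elB ℚ F = elA ℚ F :=
      of_anti_mul ww ww00 ww11 false true true false
    have a3 : of ℚ (Matrix.SpecialLinearGroup (Fin 2) F) ww * elC ℚ F = elC ℚ F :=
      of_anti_mul ww ww00 ww11 true true true true
    have a4 : of ℚ (Matrix.SpecialLinearGroup (Fin 2) F) ww * elDp ℚ F = elEm ℚ F :=
      of_anti_mul ww ww00 ww11 true true false true
    have a5 : of ℚ (Matrix.SpecialLinearGroup (Fin 2) F) ww * elDm ℚ F = elEp ℚ F :=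
      of_anti_mul ww ww00 ww11 true false true true
    have a6 : of ℚ (Matrix.SpecialLinearGroup (Fin 2) F) ww * elEp ℚ F = elDm ℚ F :=
      of_anti_mul ww ww00 ww11 true true true false
    have a7 : of ℚ (Matrix.SpecialLinearGroup (Fin 2) F) ww * elEm ℚ F = elDp ℚ F :=
      of_anti_mul ww ww00 ww11 false true true true
    rw [hπ₂]
    simp only [mul_add, mul_sub, mul_smul_comm, a1, a2, a3, a4, a5, a6, a7]
    module
  have hw'pi : of ℚ (Matrix.SpecialLinearGroup (Fin 2) F) ww' * π₂ = π₂ := by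
    have a1 : of ℚ (Matrix.SpecialLinearGroup (Fin 2) F) ww' * elA ℚ F = elB ℚ F :=
      of_anti_mul ww' ww'00 ww'11 true false false true
    have a2 : of ℚ (Matrix.SpecialLinearGroup (Fin 2) F) ww' * elB ℚ F = elA ℚ F :=
      of_anti_mul ww' ww'00 ww'11 false true true false
    have a3 : of ℚ (Matrix.SpecialLinearGroup (Fin 2) F) ww' * elC ℚ F = elC ℚ F :=
      of_anti_mul ww' ww'00 ww'11 true true true true
    have a4 : of ℚ (Matrix.SpecialLinearGroup (Fin 2) F) ww' * elDp ℚ F = elEm ℚ F :=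
      of_anti_mul ww' ww'00 ww'11 true true false true
    have a5 : of ℚ (Matrix.SpecialLinearGroup (Fin 2) F) ww' * elDm ℚ F = elEp ℚ F :=
      of_anti_mul ww' ww'00 ww'11 true false true true
    have a6 : of ℚ (Matrix.SpecialLinearGroup (Fin 2) F) ww' * elEp ℚ F = elDm ℚ F :=
      of_anti_mul ww' ww'00 ww'11 true true true false
    have a7 : of ℚ (Matrix.SpecialLinearGroup (Fin 2) F) ww' * elEm ℚ F = elDp ℚ F :=
      of_anti_mul ww' ww'00 ww'11 false true true true
    rw [hπ₂]
    simp only [mul_add, mul_sub, mul_smul_comm, a1, a2, a3, a4, a5, a6, a7]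
    module
  have hDppi : elDp ℚ F * π₂ = (1 - q) • π₂ := by
    have hrel : elDp ℚ F = NN * elA ℚ F - elA ℚ F := by
      rw [NN_elA, botS_FT]; abel
    rw [hrel, sub_mul, mul_assoc, hApi, mul_smul_comm, hNpi, smul_zero]
    module
  have hEmpi : elEm ℚ F * π₂ = (1 - q) • π₂ := by
    have hrel : of ℚ (Matrix.SpecialLinearGroup (Fin 2) F) ww * elDp ℚ F = elEm ℚ F :=
      of_anti_mul ww ww00 ww11 true true false true
    rw [← hrel, mul_assoc, hDppi, mul_smul_comm, hwpi]
  have hDmpi : elDm ℚ F * π₂ = (1 - q) • π₂ := by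
    have hrel : elEm ℚ F * of ℚ (Matrix.SpecialLinearGroup (Fin 2) F) ww' = elDm ℚ F :=
      anti_mul_of ww' ww'00 ww'11 false true true true
    rw [← hrel, mul_assoc, hw'pi, hEmpi]
  have hEppi : elEp ℚ F * π₂ = (1 - q) • π₂ := by
    have hrel : of ℚ (Matrix.SpecialLinearGroup (Fin 2) F) ww * elDm ℚ F = elEp ℚ F :=
      of_anti_mul ww ww00 ww11 true false true true
    rw [← hrel, mul_assoc, hDmpi, mul_smul_comm, hwpi]
  have hCpi : elC ℚ F * π₂ = (2 * (q - 1)) • π₂ := by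
    have hrel : elC ℚ F = NN * elDm ℚ F - elDm ℚ F - elEm ℚ F := by
      rw [NN_elDm, botS_TT]; abel
    rw [hrel, sub_mul, sub_mul, mul_assoc, hDmpi, mul_smul_comm, hNpi, smul_zero, hEmpi]
    module
  exact ⟨hApi, hBpi, hCpi, hDppi, hDmpi, hEppi, hEmpi⟩
end

section
/- In ℚ[SL₂(F)], the idempotent π₃ induces a character of the support-class algebra with values A ↦ q−1, B ↦ 1−q, C ↦ 0, D₊ ↦ 1−q, D₋ ↦ 1−q, E₊ ↦ q−1, E₋ ↦ q−1; concretely: A·π₃ = (q−1)·π₃, B·π₃ = (1−q)·π₃, C·π₃ = 0, D₊·π₃ = (1−q)·π₃, D₋·π₃ = (1−q)·π₃, E₊·π₃ = (q−1)·π₃, and E₋·π₃ = (q−1)·π₃. -/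
open MonoidAlgebra

namespace Pi3Aux

open Finset

variable (F : Type*) [Field F] [Fintype F] [DecidableEq F]

abbrev SL2 := Matrix.SpecialLinearGroup (Fin 2) F

/-- the underlying finset of a support class -/
def cls (b₁₁ b₁₂ b₂₁ b₂₂ : Bool) : Finset (SL2 F) :=
  Finset.univ.filter
      (fun g : Matrix.SpecialLinearGroup (Fin 2) F =>
        (b₁₁ = true ↔ (g : Matrix (Fin 2) (Fin 2) F) 0 0 ≠ 0) ∧
        (b₁₂ = true ↔ (g : Matrix (Fin 2) (Fin 2) F) 0 1 ≠ 0) ∧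
        (b₂₁ = true ↔ (g : Matrix (Fin 2) (Fin 2) F) 1 0 ≠ 0) ∧
        (b₂₂ = true ↔ (g : Matrix (Fin 2) (Fin 2) F) 1 1 ≠ 0))

variable {F}

instance : DecidableEq (SL2 F) := fun a b => decidable_of_iff (a.1 = b.1) Subtype.ext_iff.symm

set_option linter.unusedSectionVars false

lemma suppClass_eq (b₁ b₂ b₃ b₄ : Bool) :
    suppClass ℚ F b₁ b₂ b₃ b₄ = ∑ g ∈ cls F b₁ b₂ b₃ b₄, MonoidAlgebra.of ℚ (SL2 F) g := rfl

lemma mem_cls {b₁ b₂ b₃ b₄ : Bool} {g : SL2 F} :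
    g ∈ cls F b₁ b₂ b₃ b₄ ↔
      ((b₁ = true ↔ g 0 0 ≠ 0) ∧ (b₂ = true ↔ g 0 1 ≠ 0) ∧
       (b₃ = true ↔ g 1 0 ≠ 0) ∧ (b₄ = true ↔ g 1 1 ≠ 0)) := by
  simp [cls]

lemma det_rel (g : SL2 F) : g 0 0 * g 1 1 - g 0 1 * g 1 0 = 1 := by
  have := g.2
  rwa [Matrix.det_fin_two] at this

lemma suppClass_apply (b₁ b₂ b₃ b₄ : Bool) (g : SL2 F) :
    (suppClass ℚ F b₁ b₂ b₃ b₄).coeff g = if g ∈ cls F b₁ b₂ b₃ b₄ then (1 : ℚ) else 0 := by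
  rw [suppClass_eq, MonoidAlgebra.coeff_sum, Finset.sum_apply']
  simp only [MonoidAlgebra.of_apply, MonoidAlgebra.coeff_single, Finsupp.single_apply]
  rw [Finset.sum_ite_eq' (cls F b₁ b₂ b₃ b₄) g (fun _ => (1:ℚ))]

lemma mul_entry (g h : SL2 F) (i j : Fin 2) :
    (g * h) i j = g i 0 * h 0 j + g i 1 * h 1 j := by
  show ((g * h : SL2 F) : Matrix (Fin 2) (Fin 2) F) i j = _
  rw [Matrix.SpecialLinearGroup.coe_mul, Matrix.mul_apply, Fin.sum_univ_two]


/-- unipotent upper triangular matrix -/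
def umat (x : F) : SL2 F :=
  ⟨!![1, x; 0, 1], by simp [Matrix.det_fin_two]⟩

@[simp] lemma umat_00 (x : F) : (umat x) 0 0 = 1 := rfl
@[simp] lemma umat_01 (x : F) : (umat x) 0 1 = x := rfl
@[simp] lemma umat_10 (x : F) : (umat x) 1 0 = 0 := rfl
@[simp] lemma umat_11 (x : F) : (umat x) 1 1 = 1 := rfl

lemma umat_inv (x : F) : (umat x)⁻¹ = umat (-x) := by
  apply inv_eq_of_mul_eq_one_right
  apply Matrix.SpecialLinearGroup.ext
  intro i j
  rw [mul_entry]
  fin_cases i <;> fin_cases j <;> simp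

lemma umul_0 (x : F) (g : SL2 F) (j : Fin 2) :
    (umat x * g) 0 j = g 0 j + x * g 1 j := by
  rw [mul_entry]; simp

lemma umul_1 (x : F) (g : SL2 F) (j : Fin 2) :
    (umat x * g) 1 j = g 1 j := by
  rw [mul_entry]; simp

variable (F) in
/-- the sum of the nontrivial upper unipotents -/
noncomputable def Np : MonoidAlgebra ℚ (SL2 F) :=
  ∑ x ∈ Finset.univ.filter (fun x : F => x ≠ 0), MonoidAlgebra.of ℚ (SL2 F) (umat x)

lemma Np_mul_apply (b₁ b₂ b₃ b₄ : Bool) (g : SL2 F) :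
    (Np F * suppClass ℚ F b₁ b₂ b₃ b₄).coeff g =
      ((Finset.univ.filter
        (fun x : F => x ≠ 0 ∧ umat (-x) * g ∈ cls F b₁ b₂ b₃ b₄)).card : ℚ) := by
  rw [Np, Finset.sum_mul, MonoidAlgebra.coeff_sum, Finset.sum_apply']
  have h1 : ∀ x ∈ Finset.univ.filter (fun x : F => x ≠ 0),
      (MonoidAlgebra.of ℚ (SL2 F) (umat x) * suppClass ℚ F b₁ b₂ b₃ b₄).coeff g
        = if umat (-x) * g ∈ cls F b₁ b₂ b₃ b₄ then (1:ℚ) else 0 := by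
    intro x _
    rw [MonoidAlgebra.of_apply, MonoidAlgebra.single_mul_apply, one_mul, umat_inv,
      suppClass_apply]
  rw [Finset.sum_congr rfl h1, Finset.sum_boole, Finset.filter_filter]

lemma card_ne_zero_q : (((Finset.univ.filter (fun x : F => x ≠ 0)).card : ℚ)) =
    (Fintype.card F : ℚ) - 1 := by
  rw [Finset.filter_ne' Finset.univ 0, Finset.card_erase_of_mem (Finset.mem_univ _),
    Finset.card_univ]
  have : 1 ≤ Fintype.card F := Fintype.card_pos
  push_cast [Nat.cast_sub this]
  ring

lemma card_ne_ne_q (c : F) (hc : c ≠ 0) :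
    (((Finset.univ.filter (fun x : F => x ≠ 0 ∧ x ≠ c)).card : ℚ)) =
    (Fintype.card F : ℚ) - 2 := by
  have h : Finset.univ.filter (fun x : F => x ≠ 0 ∧ x ≠ c) = Finset.univ \ {0, c} := by
    ext x
    simp [not_or]
  rw [h, Finset.card_sdiff_of_subset (Finset.subset_univ _), Finset.card_univ]
  rw [Finset.card_insert_of_notMem (by simp [Ne.symm hc]), Finset.card_singleton]
  have : 2 ≤ Fintype.card F := Fintype.one_lt_card
  push_cast [Nat.cast_sub this]
  ring


lemma helper_ne {a b : F} (hb : b ≠ 0) (x : F) : a + -x * b = 0 ↔ x = a * b⁻¹ := by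
  rw [neg_mul, add_neg_eq_zero]
  constructor
  · intro h; rw [h]; field_simp
  · intro h; rw [h]; field_simp

lemma Np_mul_A : Np F * suppClass ℚ F true false false true
    = suppClass ℚ F true true false true := by
  refine MonoidAlgebra.ext <| Finsupp.ext fun g => ?_
  rw [Np_mul_apply, suppClass_apply]
  by_cases h10 : g 1 0 = 0
  · by_cases h11 : g 1 1 = 0
    · exact absurd (det_rel g) (by rw [h10, h11]; simp)
    · have hdet := det_rel g
      rw [h10, mul_zero, sub_zero] at hdet
      have h00 : g 0 0 ≠ 0 := left_ne_zero_of_mul_eq_one hdet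
      by_cases h01 : g 0 1 = 0
      · rw [if_neg (by simp [mem_cls, h01]), show (Finset.univ.filter fun x : F =>
            x ≠ 0 ∧ umat (-x) * g ∈ cls F true false false true) = ∅ from ?_]
        · simp
        · rw [Finset.filter_eq_empty_iff]
          intro x _
          simp [mem_cls, umul_0, umul_1, h10, h11, h01, h00]
      · rw [if_pos (by simp [mem_cls, h01, h10, h11, h00]),
          show (Finset.univ.filter fun x : F =>
            x ≠ 0 ∧ umat (-x) * g ∈ cls F true false false true) = {g 0 1 * (g 1 1)⁻¹} from ?_]
        · simp
        · ext x
          simp only [Finset.mem_filter, Finset.mem_univ, true_and, mem_cls, umul_0, umul_1,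
            Finset.mem_singleton, h10, mul_zero, neg_mul, zero_mul, neg_zero, add_zero]
          constructor
          · rintro ⟨hx, -, h2, -, -⟩
            simp only [Bool.false_eq_true, false_iff, not_not, neg_mul] at h2
            rw [← neg_mul, helper_ne h11] at h2
            exact h2
          · intro hx
            subst hx
            refine ⟨by simp [h01, h11], ?_, ?_, ?_, ?_⟩ <;>
              simp [helper_ne h11, h00, h10, h11, h01]
  · rw [if_neg (by simp [mem_cls, h10]), show (Finset.univ.filter fun x : F =>
        x ≠ 0 ∧ umat (-x) * g ∈ cls F true false false true) = ∅ from ?_]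
    · simp
    · rw [Finset.filter_eq_empty_iff]
      intro x _
      simp [mem_cls, umul_0, umul_1, h10]


lemma helper_det1 (g : SL2 F) (h11 : g 1 1 ≠ 0) :
    g 0 0 + -(g 0 1 * (g 1 1)⁻¹) * g 1 0 ≠ 0 := by
  have key : g 0 0 * g 1 1 - g 0 1 * g 1 0
      = (g 0 0 + -(g 0 1 * (g 1 1)⁻¹) * g 1 0) * g 1 1 := by
    field_simp; ring
  intro h
  have h2 : (1:F) = 0 := by rw [← det_rel g, key, h, zero_mul]
  exact one_ne_zero h2

lemma helper_det2 (g : SL2 F) (h10 : g 1 0 ≠ 0) :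
    g 0 1 + -(g 0 0 * (g 1 0)⁻¹) * g 1 1 ≠ 0 := by
  have key : g 0 0 * g 1 1 - g 0 1 * g 1 0
      = -((g 0 1 + -(g 0 0 * (g 1 0)⁻¹) * g 1 1) * g 1 0) := by
    field_simp; ring
  intro h
  have h2 : (1:F) = 0 := by rw [← det_rel g, key, h, zero_mul, neg_zero]
  exact one_ne_zero h2

lemma Np_mul_B : Np F * suppClass ℚ F false true true false
    = suppClass ℚ F true true true false := by
  refine MonoidAlgebra.ext <| Finsupp.ext fun g => ?_
  rw [Np_mul_apply, suppClass_apply]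
  by_cases h10 : g 1 0 = 0
  · rw [if_neg (by simp [mem_cls, h10]), show (Finset.univ.filter fun x : F =>
        x ≠ 0 ∧ umat (-x) * g ∈ cls F false true true false) = ∅ from ?_]
    · simp
    · rw [Finset.filter_eq_empty_iff]; intro x _
      simp [mem_cls, umul_0, umul_1, h10]
  · by_cases h11 : g 1 1 = 0
    · have hdet := det_rel g
      rw [h11, mul_zero, zero_sub, neg_eq_iff_eq_neg] at hdet
      have h01 : g 0 1 ≠ 0 := by
        intro h; rw [h, zero_mul] at hdet; exact absurd hdet (by norm_num)
      by_cases h00 : g 0 0 = 0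
      · rw [if_neg (by simp [mem_cls, h00]), show (Finset.univ.filter fun x : F =>
            x ≠ 0 ∧ umat (-x) * g ∈ cls F false true true false) = ∅ from ?_]
        · simp
        · rw [Finset.filter_eq_empty_iff]; intro x _
          rintro ⟨hx, hmem⟩
          rw [mem_cls] at hmem
          obtain ⟨h1, -, -, -⟩ := hmem
          rw [umul_0] at h1
          have h0 : g 0 0 + -x * g 1 0 = 0 := by
            by_contra hne
            exact Bool.false_ne_true (h1.mpr hne)
          rw [h00, zero_add] at h0
          rcases mul_eq_zero.mp h0 with h | h
          · exact hx (neg_eq_zero.mp h)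
          · exact h10 h
      · rw [if_pos (by simp [mem_cls, h00, h01, h10, h11]),
          show (Finset.univ.filter fun x : F =>
            x ≠ 0 ∧ umat (-x) * g ∈ cls F false true true false) = {g 0 0 * (g 1 0)⁻¹} from ?_]
        · simp
        · ext x
          simp only [Finset.mem_filter, Finset.mem_univ, true_and, mem_cls, umul_0, umul_1,
            Finset.mem_singleton]
          constructor
          · rintro ⟨hx, h1, -, -, -⟩
            simp only [Bool.false_eq_true, false_iff, not_not] at h1
            rw [helper_ne h10] at h1
            exact h1
          · intro hx
            subst hx
            refine ⟨by simp [h00, h10], ?_, ?_, ?_, ?_⟩ <;>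
              simp [helper_ne h10, h00, h01, h10, h11]
    · rw [if_neg (by simp [mem_cls, h11]), show (Finset.univ.filter fun x : F =>
          x ≠ 0 ∧ umat (-x) * g ∈ cls F false true true false) = ∅ from ?_]
      · simp
      · rw [Finset.filter_eq_empty_iff]; intro x _
        simp [mem_cls, umul_0, umul_1, h11]


lemma Np_mul_Dp : Np F * suppClass ℚ F true true false true
    = ((Fintype.card F : ℚ) - 1) • suppClass ℚ F true false false true
      + ((Fintype.card F : ℚ) - 2) • suppClass ℚ F true true false true := by
  refine MonoidAlgebra.ext <| Finsupp.ext fun g => ?_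
  simp only [MonoidAlgebra.coeff_add, MonoidAlgebra.coeff_smul]
  rw [Np_mul_apply, Finsupp.add_apply, Finsupp.smul_apply, Finsupp.smul_apply,
    suppClass_apply, suppClass_apply, smul_eq_mul, smul_eq_mul]
  by_cases h10 : g 1 0 = 0
  · by_cases h11 : g 1 1 = 0
    · exact absurd (det_rel g) (by rw [h10, h11]; simp)
    · have hdet := det_rel g
      rw [h10, mul_zero, sub_zero] at hdet
      have h00 : g 0 0 ≠ 0 := left_ne_zero_of_mul_eq_one hdet
      by_cases h01 : g 0 1 = 0
      · rw [if_pos (by simp [mem_cls, h00, h01, h10, h11]), if_neg (by simp [mem_cls, h01]),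
          show (Finset.univ.filter fun x : F =>
            x ≠ 0 ∧ umat (-x) * g ∈ cls F true true false true)
            = Finset.univ.filter (fun x : F => x ≠ 0) from ?_]
        · rw [card_ne_zero_q]; ring
        · apply Finset.filter_congr
          intro x _
          simp only [mem_cls, umul_0, umul_1, h10, h11, h01, h00, mul_zero, neg_mul, zero_mul,
            neg_zero, add_zero, zero_add, ne_eq, iff_true]
          constructor
          · rintro ⟨hx, -⟩; exact hx
          · intro hx; simp [hx, h11]
      · rw [if_neg (by simp [mem_cls, h01]), if_pos (by simp [mem_cls, h00, h01, h10, h11]),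
          show (Finset.univ.filter fun x : F =>
            x ≠ 0 ∧ umat (-x) * g ∈ cls F true true false true)
            = Finset.univ.filter (fun x : F => x ≠ 0 ∧ x ≠ g 0 1 * (g 1 1)⁻¹) from ?_]
        · rw [card_ne_ne_q _ (by simp [h01, h11])]; ring
        · apply Finset.filter_congr
          intro x _
          simp only [mem_cls, umul_0, umul_1, h10, mul_zero, neg_mul, zero_mul, neg_zero,
            add_zero, ne_eq]
          constructor
          · rintro ⟨hx, -, h2, -, -⟩
            refine ⟨hx, ?_⟩
            simp only [true_iff] at h2
            intro heq
            apply h2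
            rw [← neg_mul, helper_ne h11]
            exact heq
          · rintro ⟨hx, hne⟩
            refine ⟨hx, by simp [h00], ?_, by simp [h10], by simp [h11]⟩
            simp only [true_iff]
            exact fun h => hne ((helper_ne h11 x).mp (by rw [neg_mul]; exact h))
  · rw [if_neg (by simp [mem_cls, h10]), if_neg (by simp [mem_cls, h10]),
      show (Finset.univ.filter fun x : F =>
        x ≠ 0 ∧ umat (-x) * g ∈ cls F true true false true) = ∅ from ?_]
    · simp
    · rw [Finset.filter_eq_empty_iff]; intro x _
      simp [mem_cls, umul_0, umul_1, h10]


lemma Np_mul_Ep : Np F * suppClass ℚ F true true true false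
    = ((Fintype.card F : ℚ) - 1) • suppClass ℚ F false true true false
      + ((Fintype.card F : ℚ) - 2) • suppClass ℚ F true true true false := by
  refine MonoidAlgebra.ext <| Finsupp.ext fun g => ?_
  simp only [MonoidAlgebra.coeff_add, MonoidAlgebra.coeff_smul]
  rw [Np_mul_apply, Finsupp.add_apply, Finsupp.smul_apply, Finsupp.smul_apply,
    suppClass_apply, suppClass_apply, smul_eq_mul, smul_eq_mul]
  by_cases h11 : g 1 1 = 0
  · by_cases h10 : g 1 0 = 0
    · exact absurd (det_rel g) (by rw [h10, h11]; simp)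
    · have hdet := det_rel g
      rw [h11, mul_zero, zero_sub, neg_eq_iff_eq_neg] at hdet
      have h01 : g 0 1 ≠ 0 := by
        intro h; rw [h, zero_mul] at hdet; exact absurd hdet (by norm_num)
      by_cases h00 : g 0 0 = 0
      · rw [if_pos (by simp [mem_cls, h00, h01, h10, h11]), if_neg (by simp [mem_cls, h00]),
          show (Finset.univ.filter fun x : F =>
            x ≠ 0 ∧ umat (-x) * g ∈ cls F true true true false)
            = Finset.univ.filter (fun x : F => x ≠ 0) from ?_]
        · rw [card_ne_zero_q]; ring
        · apply Finset.filter_congr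
          intro x _
          simp only [mem_cls, umul_0, umul_1, h11, h00, mul_zero, neg_mul, zero_mul,
            neg_zero, add_zero, zero_add, ne_eq]
          constructor
          · rintro ⟨hx, -⟩; exact hx
          · intro hx; simp [hx, h10, h01]
      · rw [if_neg (by simp [mem_cls, h00]), if_pos (by simp [mem_cls, h00, h01, h10, h11]),
          show (Finset.univ.filter fun x : F =>
            x ≠ 0 ∧ umat (-x) * g ∈ cls F true true true false)
            = Finset.univ.filter (fun x : F => x ≠ 0 ∧ x ≠ g 0 0 * (g 1 0)⁻¹) from ?_]
        · rw [card_ne_ne_q _ (by simp [h00, h10])]; ring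
        · apply Finset.filter_congr
          intro x _
          simp only [mem_cls, umul_0, umul_1, h11, mul_zero, neg_mul, zero_mul, neg_zero,
            add_zero, ne_eq]
          constructor
          · rintro ⟨hx, h1, -, -, -⟩
            refine ⟨hx, ?_⟩
            simp only [true_iff] at h1
            intro heq
            apply h1
            rw [← neg_mul, helper_ne h10]
            exact heq
          · rintro ⟨hx, hne⟩
            refine ⟨hx, ?_, by simp [h01], by simp [h10], by simp⟩
            simp only [true_iff]
            exact fun h => hne ((helper_ne h10 x).mp (by rw [neg_mul]; exact h))
  · rw [if_neg (by simp [mem_cls, h11]), if_neg (by simp [mem_cls, h11]),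
      show (Finset.univ.filter fun x : F =>
        x ≠ 0 ∧ umat (-x) * g ∈ cls F true true true false) = ∅ from ?_]
    · simp
    · rw [Finset.filter_eq_empty_iff]; intro x _
      simp [mem_cls, umul_0, umul_1, h11]

lemma Np_mul_Dm : Np F * suppClass ℚ F true false true true
    = suppClass ℚ F true true true true + suppClass ℚ F false true true true := by
  refine MonoidAlgebra.ext <| Finsupp.ext fun g => ?_
  simp only [MonoidAlgebra.coeff_add]
  rw [Np_mul_apply, Finsupp.add_apply, suppClass_apply, suppClass_apply]
  by_cases h10 : g 1 0 = 0
  · rw [if_neg (by simp [mem_cls, h10]), if_neg (by simp [mem_cls, h10]),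
      show (Finset.univ.filter fun x : F =>
        x ≠ 0 ∧ umat (-x) * g ∈ cls F true false true true) = ∅ from ?_]
    · simp
    · rw [Finset.filter_eq_empty_iff]; intro x _
      simp [mem_cls, umul_0, umul_1, h10]
  · by_cases h11 : g 1 1 = 0
    · rw [if_neg (by simp [mem_cls, h11]), if_neg (by simp [mem_cls, h11]),
        show (Finset.univ.filter fun x : F =>
          x ≠ 0 ∧ umat (-x) * g ∈ cls F true false true true) = ∅ from ?_]
      · simp
      · rw [Finset.filter_eq_empty_iff]; intro x _
        simp [mem_cls, umul_0, umul_1, h11]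
    · by_cases h01 : g 0 1 = 0
      · rw [if_neg (by simp [mem_cls, h01]), if_neg (by simp [mem_cls, h01]),
          show (Finset.univ.filter fun x : F =>
            x ≠ 0 ∧ umat (-x) * g ∈ cls F true false true true) = ∅ from ?_]
        · simp
        · rw [Finset.filter_eq_empty_iff]; intro x _
          rintro ⟨hx, hmem⟩
          rw [mem_cls] at hmem
          obtain ⟨-, h2, -, -⟩ := hmem
          rw [umul_0] at h2
          have h0 : g 0 1 + -x * g 1 1 = 0 := by
            by_contra hne
            exact Bool.false_ne_true (h2.mpr hne)
          rw [helper_ne h11] at h0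
          rw [h0, h01, zero_mul] at hx
          exact hx rfl
      · rw [show (Finset.univ.filter fun x : F =>
            x ≠ 0 ∧ umat (-x) * g ∈ cls F true false true true)
            = {g 0 1 * (g 1 1)⁻¹} from ?_]
        · by_cases h00 : g 0 0 = 0
          · rw [if_neg (by simp [mem_cls, h00]), if_pos (by simp [mem_cls, h00, h01, h10, h11])]
            simp
          · rw [if_pos (by simp [mem_cls, h00, h01, h10, h11]), if_neg (by simp [mem_cls, h00])]
            simp
        · ext x
          simp only [Finset.mem_filter, Finset.mem_univ, true_and, mem_cls, umul_0, umul_1,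
            Finset.mem_singleton]
          constructor
          · rintro ⟨hx, -, h2, -, -⟩
            simp only [Bool.false_eq_true, false_iff, not_not] at h2
            rw [helper_ne h11] at h2
            exact h2
          · intro hx
            subst hx
            refine ⟨by simp [h01, h11], ?_, ?_, ?_, ?_⟩
            · simpa using helper_det1 g h11
            · simp only [Bool.false_eq_true, false_iff, not_not]
              field_simp
              ring
            · simp [h10]
            · simp [h11]

lemma Np_mul_Em : Np F * suppClass ℚ F false true true true
    = suppClass ℚ F true true true true + suppClass ℚ F true false true true := by
  refine MonoidAlgebra.ext <| Finsupp.ext fun g => ?_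
  simp only [MonoidAlgebra.coeff_add]
  rw [Np_mul_apply, Finsupp.add_apply, suppClass_apply, suppClass_apply]
  by_cases h10 : g 1 0 = 0
  · rw [if_neg (by simp [mem_cls, h10]), if_neg (by simp [mem_cls, h10]),
      show (Finset.univ.filter fun x : F =>
        x ≠ 0 ∧ umat (-x) * g ∈ cls F false true true true) = ∅ from ?_]
    · simp
    · rw [Finset.filter_eq_empty_iff]; intro x _
      simp [mem_cls, umul_0, umul_1, h10]
  · by_cases h11 : g 1 1 = 0
    · rw [if_neg (by simp [mem_cls, h11]), if_neg (by simp [mem_cls, h11]),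
        show (Finset.univ.filter fun x : F =>
          x ≠ 0 ∧ umat (-x) * g ∈ cls F false true true true) = ∅ from ?_]
      · simp
      · rw [Finset.filter_eq_empty_iff]; intro x _
        simp [mem_cls, umul_0, umul_1, h11]
    · by_cases h00 : g 0 0 = 0
      · rw [if_neg (by simp [mem_cls, h00]), if_neg (by simp [mem_cls, h00]),
          show (Finset.univ.filter fun x : F =>
            x ≠ 0 ∧ umat (-x) * g ∈ cls F false true true true) = ∅ from ?_]
        · simp
        · rw [Finset.filter_eq_empty_iff]; intro x _
          rintro ⟨hx, hmem⟩
          rw [mem_cls] at hmem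
          obtain ⟨h1, -, -, -⟩ := hmem
          rw [umul_0] at h1
          have h0 : g 0 0 + -x * g 1 0 = 0 := by
            by_contra hne
            exact Bool.false_ne_true (h1.mpr hne)
          rw [helper_ne h10] at h0
          rw [h0, h00, zero_mul] at hx
          exact hx rfl
      · rw [show (Finset.univ.filter fun x : F =>
            x ≠ 0 ∧ umat (-x) * g ∈ cls F false true true true)
            = {g 0 0 * (g 1 0)⁻¹} from ?_]
        · by_cases h01 : g 0 1 = 0
          · rw [if_neg (by simp [mem_cls, h01]), if_pos (by simp [mem_cls, h00, h01, h10, h11])]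
            simp
          · rw [if_pos (by simp [mem_cls, h00, h01, h10, h11]), if_neg (by simp [mem_cls, h01])]
            simp
        · ext x
          simp only [Finset.mem_filter, Finset.mem_univ, true_and, mem_cls, umul_0, umul_1,
            Finset.mem_singleton]
          constructor
          · rintro ⟨hx, h1, -, -, -⟩
            simp only [Bool.false_eq_true, false_iff, not_not] at h1
            rw [helper_ne h10] at h1
            exact h1
          · intro hx
            subst hx
            refine ⟨by simp [h00, h10], ?_, ?_, ?_, ?_⟩
            · simp only [Bool.false_eq_true, false_iff, not_not]
              field_simp
              ring
            · simpa using helper_det2 g h10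
            · simp [h10]
            · simp [h11]


lemma diag_mul_mem {a : SL2 F} (ha : a ∈ cls F true false false true)
    {b₁ b₂ b₃ b₄ : Bool} (g : SL2 F) :
    a * g ∈ cls F b₁ b₂ b₃ b₄ ↔ g ∈ cls F b₁ b₂ b₃ b₄ := by
  rw [mem_cls] at ha
  obtain ⟨ha00, ha01, ha10, ha11⟩ := ha
  have h00 : a 0 0 ≠ 0 := ha00.mp rfl
  have h11 : a 1 1 ≠ 0 := ha11.mp rfl
  have h01 : a 0 1 = 0 := by by_contra h; exact Bool.false_ne_true (ha01.mpr h)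
  have h10 : a 1 0 = 0 := by by_contra h; exact Bool.false_ne_true (ha10.mpr h)
  rw [mem_cls, mem_cls]
  simp [mul_entry, h01, h10, h00, h11, mul_ne_zero_iff]

lemma anti_mul_mem {a : SL2 F} (ha : a ∈ cls F false true true false)
    {b₁ b₂ b₃ b₄ : Bool} (g : SL2 F) :
    a * g ∈ cls F b₁ b₂ b₃ b₄ ↔ g ∈ cls F b₃ b₄ b₁ b₂ := by
  rw [mem_cls] at ha
  obtain ⟨ha00, ha01, ha10, ha11⟩ := ha
  have h01 : a 0 1 ≠ 0 := ha01.mp rfl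
  have h10 : a 1 0 ≠ 0 := ha10.mp rfl
  have h00 : a 0 0 = 0 := by by_contra h; exact Bool.false_ne_true (ha00.mpr h)
  have h11 : a 1 1 = 0 := by by_contra h; exact Bool.false_ne_true (ha11.mpr h)
  rw [mem_cls, mem_cls]
  simp only [mul_entry, h00, h11, zero_mul, zero_add, add_zero, mul_ne_zero_iff]
  constructor
  · rintro ⟨c1, c2, c3, c4⟩
    exact ⟨by rw [c3]; simp [h10], by rw [c4]; simp [h10], by rw [c1]; simp [h01],
      by rw [c2]; simp [h01]⟩
  · rintro ⟨c1, c2, c3, c4⟩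
    exact ⟨by rw [c3]; simp [h01], by rw [c4]; simp [h01], by rw [c1]; simp [h10],
      by rw [c2]; simp [h10]⟩

lemma mul_anti_mem {a : SL2 F} (ha : a ∈ cls F false true true false)
    {b₁ b₂ b₃ b₄ : Bool} (g : SL2 F) :
    g * a ∈ cls F b₁ b₂ b₃ b₄ ↔ g ∈ cls F b₂ b₁ b₄ b₃ := by
  rw [mem_cls] at ha
  obtain ⟨ha00, ha01, ha10, ha11⟩ := ha
  have h01 : a 0 1 ≠ 0 := ha01.mp rfl
  have h10 : a 1 0 ≠ 0 := ha10.mp rfl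
  have h00 : a 0 0 = 0 := by by_contra h; exact Bool.false_ne_true (ha00.mpr h)
  have h11 : a 1 1 = 0 := by by_contra h; exact Bool.false_ne_true (ha11.mpr h)
  rw [mem_cls, mem_cls]
  simp only [mul_entry, h00, h11, mul_zero, zero_add, add_zero, mul_ne_zero_iff]
  constructor
  · rintro ⟨c1, c2, c3, c4⟩
    exact ⟨by rw [c2]; simp [h01], by rw [c1]; simp [h10], by rw [c4]; simp [h01],
      by rw [c3]; simp [h10]⟩
  · rintro ⟨c1, c2, c3, c4⟩
    exact ⟨by rw [c2]; simp [h10], by rw [c1]; simp [h01], by rw [c4]; simp [h10],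
      by rw [c3]; simp [h01]⟩

lemma of_diag_mul {a : SL2 F} (ha : a ∈ cls F true false false true) (b₁ b₂ b₃ b₄ : Bool) :
    MonoidAlgebra.of ℚ (SL2 F) a * suppClass ℚ F b₁ b₂ b₃ b₄
      = suppClass ℚ F b₁ b₂ b₃ b₄ := by
  refine MonoidAlgebra.ext <| Finsupp.ext fun g => ?_
  rw [MonoidAlgebra.of_apply, MonoidAlgebra.single_mul_apply, one_mul, suppClass_apply,
    suppClass_apply]
  have h : a⁻¹ * g ∈ cls F b₁ b₂ b₃ b₄ ↔ g ∈ cls F b₁ b₂ b₃ b₄ := by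
    rw [← diag_mul_mem ha (a⁻¹ * g), mul_inv_cancel_left]
  simp only [h]

lemma of_anti_mul {a : SL2 F} (ha : a ∈ cls F false true true false) (b₁ b₂ b₃ b₄ : Bool) :
    MonoidAlgebra.of ℚ (SL2 F) a * suppClass ℚ F b₁ b₂ b₃ b₄
      = suppClass ℚ F b₃ b₄ b₁ b₂ := by
  refine MonoidAlgebra.ext <| Finsupp.ext fun g => ?_
  rw [MonoidAlgebra.of_apply, MonoidAlgebra.single_mul_apply, one_mul, suppClass_apply,
    suppClass_apply]
  have h : a⁻¹ * g ∈ cls F b₁ b₂ b₃ b₄ ↔ g ∈ cls F b₃ b₄ b₁ b₂ := by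
    rw [← anti_mul_mem ha (a⁻¹ * g) (b₁ := b₃) (b₂ := b₄) (b₃ := b₁) (b₄ := b₂),
      mul_inv_cancel_left]
  simp only [h]

lemma suppClass_mul_of_anti {a : SL2 F} (ha : a ∈ cls F false true true false)
    (b₁ b₂ b₃ b₄ : Bool) :
    suppClass ℚ F b₁ b₂ b₃ b₄ * MonoidAlgebra.of ℚ (SL2 F) a
      = suppClass ℚ F b₂ b₁ b₄ b₃ := by
  refine MonoidAlgebra.ext <| Finsupp.ext fun g => ?_
  rw [MonoidAlgebra.of_apply, MonoidAlgebra.mul_single_apply, mul_one, suppClass_apply,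
    suppClass_apply]
  have h : g * a⁻¹ ∈ cls F b₁ b₂ b₃ b₄ ↔ g ∈ cls F b₂ b₁ b₄ b₃ := by
    rw [← mul_anti_mem ha (g * a⁻¹) (b₁ := b₂) (b₂ := b₁) (b₃ := b₄) (b₄ := b₃),
      inv_mul_cancel_right]
  simp only [h]

lemma inv_00 (a : SL2 F) : a⁻¹ 0 0 = a 1 1 := by
  rw [Matrix.SpecialLinearGroup.SL2_inv_expl]; rfl
lemma inv_01 (a : SL2 F) : a⁻¹ 0 1 = -(a 0 1) := by
  rw [Matrix.SpecialLinearGroup.SL2_inv_expl]; rfl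
lemma inv_10 (a : SL2 F) : a⁻¹ 1 0 = -(a 1 0) := by
  rw [Matrix.SpecialLinearGroup.SL2_inv_expl]; rfl
lemma inv_11 (a : SL2 F) : a⁻¹ 1 1 = a 0 0 := by
  rw [Matrix.SpecialLinearGroup.SL2_inv_expl]; rfl

lemma anti_inv_mem {a : SL2 F} (ha : a ∈ cls F false true true false) :
    a⁻¹ ∈ cls F false true true false := by
  rw [mem_cls] at ha ⊢
  obtain ⟨h1, h2, h3, h4⟩ := ha
  refine ⟨?_, ?_, ?_, ?_⟩
  · rw [inv_00]; exact h4
  · rw [inv_01, ne_eq, neg_eq_zero, ← ne_eq]; exact h2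
  · rw [inv_10, ne_eq, neg_eq_zero, ← ne_eq]; exact h3
  · rw [inv_11]; exact h1

variable (F) in
def wmat : SL2 F := ⟨!![0, 1; -1, 0], by norm_num [Matrix.det_fin_two]⟩

@[simp] lemma wmat_00 : (wmat F) 0 0 = 0 := rfl
@[simp] lemma wmat_01 : (wmat F) 0 1 = 1 := rfl
@[simp] lemma wmat_10 : (wmat F) 1 0 = -1 := rfl
@[simp] lemma wmat_11 : (wmat F) 1 1 = 0 := rfl

lemma wmat_mem : wmat F ∈ cls F false true true false := by
  rw [mem_cls]; norm_num


lemma cardA_q : (((cls F true false false true).card : ℚ)) = (Fintype.card F : ℚ) - 1 := by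
  rw [show (cls F true false false true).card
      = (Finset.univ.filter fun x : F => x ≠ 0).card from ?_, card_ne_zero_q]
  refine Finset.card_bij' (fun g _ => g 0 0)
    (fun x hx => ⟨!![x, 0; 0, x⁻¹], ?_⟩) ?_ ?_ ?_ ?_
  · rw [Matrix.det_fin_two]
    have hx' : x ≠ 0 := by simpa using hx
    simp [mul_inv_cancel₀ hx']
  · intro g hg
    rw [mem_cls] at hg
    simp only [Finset.mem_filter, Finset.mem_univ, true_and]
    exact hg.1.mp rfl
  · intro x hx
    have hx' : x ≠ 0 := by simpa using hx
    apply mem_cls.mpr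
    refine ⟨by simpa using hx', by simp, by simp, by simpa using inv_ne_zero hx'⟩
  · intro g hg
    rw [mem_cls] at hg
    have h01 : g 0 1 = 0 := by by_contra h; exact Bool.false_ne_true (hg.2.1.mpr h)
    have h10 : g 1 0 = 0 := by by_contra h; exact Bool.false_ne_true (hg.2.2.1.mpr h)
    have hdet := det_rel g
    rw [h01, zero_mul, sub_zero] at hdet
    apply Matrix.SpecialLinearGroup.ext
    intro i j
    fin_cases i <;> fin_cases j <;>
      simp [h01, h10, inv_eq_of_mul_eq_one_right hdet]
  · intro x hx
    rfl

lemma card_swap (b₁ b₂ b₃ b₄ : Bool) :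
    (cls F b₃ b₄ b₁ b₂).card = (cls F b₁ b₂ b₃ b₄).card := by
  refine Finset.card_bij' (fun g _ => wmat F * g) (fun g _ => (wmat F)⁻¹ * g) ?_ ?_ ?_ ?_
  · intro g hg
    exact (anti_mul_mem wmat_mem g).mpr hg
  · intro g hg
    exact (anti_mul_mem (anti_inv_mem wmat_mem) g).mpr hg
  · intro g hg
    beta_reduce
    rw [inv_mul_cancel_left]
  · intro g hg
    beta_reduce
    rw [mul_inv_cancel_left]

variable (F) in
noncomputable def SAll : MonoidAlgebra ℚ (SL2 F) :=
  ∑ g : SL2 F, MonoidAlgebra.of ℚ (SL2 F) g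

lemma SAll_apply (g : SL2 F) : (SAll F).coeff g = 1 := by
  rw [SAll, MonoidAlgebra.coeff_sum, Finset.sum_apply']
  simp only [MonoidAlgebra.of_apply, MonoidAlgebra.coeff_single, Finsupp.single_apply]
  rw [Finset.sum_ite_eq' Finset.univ g (fun _ => (1:ℚ)), if_pos (Finset.mem_univ g)]

lemma SAll_mul_of (h : SL2 F) : SAll F * MonoidAlgebra.of ℚ (SL2 F) h = SAll F := by
  refine MonoidAlgebra.ext <| Finsupp.ext fun g => ?_
  rw [MonoidAlgebra.of_apply, MonoidAlgebra.mul_single_apply, mul_one, SAll_apply, SAll_apply]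

lemma SAll_mul_suppClass (b₁ b₂ b₃ b₄ : Bool) :
    SAll F * suppClass ℚ F b₁ b₂ b₃ b₄ = ((cls F b₁ b₂ b₃ b₄).card : ℚ) • SAll F := by
  rw [suppClass_eq, Finset.mul_sum,
    Finset.sum_congr rfl (fun h _ => SAll_mul_of h), Finset.sum_const,
    Nat.cast_smul_eq_nsmul ℚ]

lemma SAll_eq : SAll F
    = suppClass ℚ F true false false true + suppClass ℚ F false true true false
      + suppClass ℚ F true true true true + suppClass ℚ F true true false true
      + suppClass ℚ F true false true true + suppClass ℚ F true true true false
      + suppClass ℚ F false true true true := by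
  refine MonoidAlgebra.ext <| Finsupp.ext fun g => ?_
  rw [SAll_apply]
  simp only [MonoidAlgebra.coeff_add]
  rw [Finsupp.add_apply, Finsupp.add_apply, Finsupp.add_apply, Finsupp.add_apply,
    Finsupp.add_apply, Finsupp.add_apply]
  simp only [suppClass_apply]
  have hdet := det_rel g
  by_cases h00 : g 0 0 = 0 <;> by_cases h01 : g 0 1 = 0 <;> by_cases h10 : g 1 0 = 0 <;>
    by_cases h11 : g 1 1 = 0 <;>
    simp_all [mem_cls]

end Pi3Aux

open Pi3Aux in
theorem pi3_character (F : Type*) [Field F] [Fintype F] [DecidableEq F]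
    (hq : 2 < Fintype.card F) (q : ℚ) (hqc : q = Fintype.card F)
    (π₃ : MonoidAlgebra ℚ (Matrix.SpecialLinearGroup (Fin 2) F))
    (hπ₃ : π₃ = (2 * (q + 1))⁻¹ • (elA ℚ F - elB ℚ F) +
      (2 * (q ^ 2 - 1))⁻¹ • (-elDp ℚ F - elDm ℚ F + elEp ℚ F + elEm ℚ F)) :
    elA ℚ F * π₃ = (q - 1) • π₃ ∧
    elB ℚ F * π₃ = (1 - q) • π₃ ∧
    elC ℚ F * π₃ = 0 ∧
    elDp ℚ F * π₃ = (1 - q) • π₃ ∧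
    elDm ℚ F * π₃ = (1 - q) • π₃ ∧
    elEp ℚ F * π₃ = (q - 1) • π₃ ∧
    elEm ℚ F * π₃ = (q - 1) • π₃ := by
  subst hqc
  have h3 : (3 : ℚ) ≤ (Fintype.card F : ℚ) := by exact_mod_cast hq
  have hp1 : (Fintype.card F : ℚ) + 1 ≠ 0 := by positivity
  have hm1 : (Fintype.card F : ℚ) - 1 ≠ 0 := sub_ne_zero.mpr (by linarith)
  have hc : (2 * (Fintype.card F : ℚ) + 2 * 1)⁻¹
      = ((Fintype.card F : ℚ) - 1) * (2 * (Fintype.card F : ℚ) ^ 2 - 2 * 1)⁻¹ := by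
    have hsq : (2 * (Fintype.card F : ℚ) ^ 2 - 2 * 1)
        = (2 * (Fintype.card F : ℚ) + 2 * 1) * ((Fintype.card F : ℚ) - 1) := by ring
    have hne : (2 * (Fintype.card F : ℚ) + 2 * 1) ≠ 0 := by positivity
    rw [hsq, mul_inv, ← mul_assoc, mul_comm ((Fintype.card F : ℚ) - 1), mul_assoc,
      mul_inv_cancel₀ hm1, mul_one]
    norm_num
  -- A acts as q - 1
  have hdiag : ∀ a ∈ cls F true false false true,
      MonoidAlgebra.of ℚ (SL2 F) a * π₃ = π₃ := by
    intro a ha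
    rw [hπ₃]
    simp only [elA, elB, elDp, elDm, elEp, elEm, mul_add, mul_sub, mul_neg, mul_smul_comm,
      of_diag_mul ha]
  have hA : elA ℚ F * π₃ = ((Fintype.card F : ℚ) - 1) • π₃ := by
    calc elA ℚ F * π₃
        = ∑ a ∈ cls F true false false true, MonoidAlgebra.of ℚ (SL2 F) a * π₃ := by
          rw [show elA ℚ F = ∑ a ∈ cls F true false false true,
            MonoidAlgebra.of ℚ (SL2 F) a from rfl, Finset.sum_mul]
      _ = ∑ _a ∈ cls F true false false true, π₃ := Finset.sum_congr rfl hdiag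
      _ = ((cls F true false false true).card : ℚ) • π₃ := by
          rw [Finset.sum_const, Nat.cast_smul_eq_nsmul ℚ]
      _ = ((Fintype.card F : ℚ) - 1) • π₃ := by rw [cardA_q]
  -- antidiagonal elements act as -1
  have hW : ∀ a ∈ cls F false true true false,
      MonoidAlgebra.of ℚ (SL2 F) a * π₃ = -π₃ := by
    intro a ha
    rw [hπ₃]
    simp only [elA, elB, elDp, elDm, elEp, elEm, mul_add, mul_sub, mul_neg, mul_smul_comm,
      of_anti_mul ha]
    module
  have hB : elB ℚ F * π₃ = (1 - (Fintype.card F : ℚ)) • π₃ := by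
    calc elB ℚ F * π₃
        = ∑ a ∈ cls F false true true false, MonoidAlgebra.of ℚ (SL2 F) a * π₃ := by
          rw [show elB ℚ F = ∑ a ∈ cls F false true true false,
            MonoidAlgebra.of ℚ (SL2 F) a from rfl, Finset.sum_mul]
      _ = ∑ _a ∈ cls F false true true false, -π₃ := Finset.sum_congr rfl hW
      _ = ((cls F false true true false).card : ℚ) • (-π₃) := by
          rw [Finset.sum_const, Nat.cast_smul_eq_nsmul ℚ]
      _ = (1 - (Fintype.card F : ℚ)) • π₃ := by
          rw [card_swap true false false true, cardA_q, smul_neg, ← neg_smul, neg_sub]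
  have hNp : Np F * π₃ = -π₃ := by
    rw [hπ₃]
    simp only [elA, elB, elDp, elDm, elEp, elEm, mul_add, mul_sub, mul_neg, mul_smul_comm,
      Np_mul_A, Np_mul_B, Np_mul_Dp, Np_mul_Ep, Np_mul_Dm, Np_mul_Em]
    rw [hc]
    module
  have hDp : elDp ℚ F * π₃ = (1 - (Fintype.card F : ℚ)) • π₃ := by
    rw [show elDp ℚ F = Np F * elA ℚ F from Np_mul_A.symm, mul_assoc, hA, mul_smul_comm,
      hNp, smul_neg, ← neg_smul, neg_sub]
  have hEp : elEp ℚ F * π₃ = ((Fintype.card F : ℚ) - 1) • π₃ := by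
    rw [show elEp ℚ F = elDp ℚ F * MonoidAlgebra.of ℚ (SL2 F) (wmat F) from
        (suppClass_mul_of_anti wmat_mem true true false true).symm,
      mul_assoc, hW (wmat F) wmat_mem, mul_neg, hDp, ← neg_smul, neg_sub]
  have hEm : elEm ℚ F * π₃ = ((Fintype.card F : ℚ) - 1) • π₃ := by
    rw [show elEm ℚ F = MonoidAlgebra.of ℚ (SL2 F) (wmat F) * elDp ℚ F from
        (of_anti_mul wmat_mem true true false true).symm,
      mul_assoc, hDp, mul_smul_comm, hW (wmat F) wmat_mem, smul_neg, ← neg_smul, neg_sub]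
  have hDm : elDm ℚ F * π₃ = (1 - (Fintype.card F : ℚ)) • π₃ := by
    rw [show elDm ℚ F = MonoidAlgebra.of ℚ (SL2 F) (wmat F) * elEp ℚ F from
        (of_anti_mul wmat_mem true true true false).symm,
      mul_assoc, hEp, mul_smul_comm, hW (wmat F) wmat_mem, smul_neg, ← neg_smul, neg_sub]
  have hS : SAll F * π₃ = 0 := by
    rw [hπ₃]
    simp only [elA, elB, elDp, elDm, elEp, elEm, mul_add, mul_sub, mul_neg, mul_smul_comm,
      SAll_mul_suppClass]
    rw [card_swap true false false true, card_swap true true false true,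
      card_swap true true true false]
    module
  have hexp : elA ℚ F * π₃ + elB ℚ F * π₃ + elC ℚ F * π₃ + elDp ℚ F * π₃
      + elDm ℚ F * π₃ + elEp ℚ F * π₃ + elEm ℚ F * π₃ = 0 := by
    rw [← add_mul, ← add_mul, ← add_mul, ← add_mul, ← add_mul, ← add_mul,
      show elA ℚ F + elB ℚ F + elC ℚ F + elDp ℚ F + elDm ℚ F + elEp ℚ F + elEm ℚ F
        = SAll F from SAll_eq.symm, hS]
  have hC : elC ℚ F * π₃ = 0 := by
    have hsplit : elC ℚ F * π₃
        = (elA ℚ F * π₃ + elB ℚ F * π₃ + elC ℚ F * π₃ + elDp ℚ F * π₃ + elDm ℚ F * π₃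
            + elEp ℚ F * π₃ + elEm ℚ F * π₃)
          - (elA ℚ F * π₃ + elB ℚ F * π₃ + elDp ℚ F * π₃ + elDm ℚ F * π₃
            + elEp ℚ F * π₃ + elEm ℚ F * π₃) := by abel
    rw [hsplit, hexp, zero_sub, hA, hB, hDp, hDm, hEp, hEm]
    module
  exact ⟨hA, hB, hC, hDp, hDm, hEp, hEm⟩
end

section
/- The traces of the ℚ-linear endomorphisms of ℚ[SL₂(F)] given by left-multiplication by π₁, π₂, π₃, π₄ are respectively 1, (q+1)(q−2)/2, q(q−1)/2, and 2q. -/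
open MonoidAlgebra

lemma trace_mulLeft_eq {G : Type*} [Group G] [Fintype G] [DecidableEq G]
    (x : MonoidAlgebra ℚ G) :
    LinearMap.trace ℚ (MonoidAlgebra ℚ G) (LinearMap.mulLeft ℚ x)
      = (Fintype.card G : ℚ) * x.coeff 1 := by
  classical
  let b : Module.Basis G ℚ (MonoidAlgebra ℚ G) := MonoidAlgebra.basis G ℚ
  rw [LinearMap.trace_eq_matrix_trace ℚ b]
  rw [Matrix.trace]
  have h : ∀ g : G, (LinearMap.toMatrix b b (LinearMap.mulLeft ℚ x)) g g = x.coeff 1 := by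
    intro g
    rw [LinearMap.toMatrix_apply]
    have hb : b g = MonoidAlgebra.single g (1:ℚ) := rfl
    have hr : ∀ y : MonoidAlgebra ℚ G, b.repr y g = y.coeff g := fun y => rfl
    rw [hb, LinearMap.mulLeft_apply, hr]
    have : (x * MonoidAlgebra.single g (1:ℚ)).coeff g = x.coeff (g * g⁻¹) * 1 :=
      MonoidAlgebra.coeff_mul_single_apply x 1 g g
    simpa using this
  simp [Matrix.diag, h]

lemma suppClass_apply_one (F : Type*) [Field F] [Fintype F] [DecidableEq F]
    (b₁₁ b₁₂ b₂₁ b₂₂ : Bool) :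
    (suppClass ℚ F b₁₁ b₁₂ b₂₁ b₂₂).coeff 1 =
      if b₁₁ = true ∧ b₁₂ = false ∧ b₂₁ = false ∧ b₂₂ = true then 1 else 0 := by
  classical
  unfold suppClass
  rw [MonoidAlgebra.coeff_sum, Finsupp.finset_sum_apply]
  have h1 : ∀ g : Matrix.SpecialLinearGroup (Fin 2) F,
      (MonoidAlgebra.of ℚ (Matrix.SpecialLinearGroup (Fin 2) F) g).coeff 1
        = if g = 1 then (1:ℚ) else 0 := by
    intro g
    simp [MonoidAlgebra.of_apply, MonoidAlgebra.coeff_single, Finsupp.single_apply]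
  rw [Finset.sum_congr rfl (fun g _ => h1 g), Finset.sum_ite_eq']
  have hent : ((1 : Matrix.SpecialLinearGroup (Fin 2) F) : Matrix (Fin 2) (Fin 2) F) =
      (1 : Matrix (Fin 2) (Fin 2) F) := rfl
  have hiff : ((1 : Matrix.SpecialLinearGroup (Fin 2) F) ∈ Finset.univ.filter
      (fun g : Matrix.SpecialLinearGroup (Fin 2) F =>
        (b₁₁ = true ↔ (g : Matrix (Fin 2) (Fin 2) F) 0 0 ≠ 0) ∧
        (b₁₂ = true ↔ (g : Matrix (Fin 2) (Fin 2) F) 0 1 ≠ 0) ∧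
        (b₂₁ = true ↔ (g : Matrix (Fin 2) (Fin 2) F) 1 0 ≠ 0) ∧
        (b₂₂ = true ↔ (g : Matrix (Fin 2) (Fin 2) F) 1 1 ≠ 0))) ↔
      (b₁₁ = true ∧ b₁₂ = false ∧ b₂₁ = false ∧ b₂₂ = true) := by
    simp only [Finset.mem_filter, Finset.mem_univ, true_and, hent, Matrix.one_apply]
    cases b₁₁ <;> cases b₁₂ <;> cases b₂₁ <;> cases b₂₂ <;>
      simp [Fin.ext_iff]
  rw [if_congr hiff rfl rfl]

section CardAux
open Matrix

lemma card_SL2 (F : Type*) [Field F] [Fintype F] [DecidableEq F] :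
    Nat.card (Matrix.SpecialLinearGroup (Fin 2) F) * (Fintype.card F - 1) =
      (Fintype.card F ^ 2 - 1) * (Fintype.card F ^ 2 - Fintype.card F) := by
  classical
  set φ : GL (Fin 2) F →* Fˣ := Matrix.GeneralLinearGroup.det
  have hsurj : Function.Surjective φ := by
    intro u
    refine ⟨Matrix.GeneralLinearGroup.mkOfDetNeZero (Matrix.diagonal ![(u:F), 1]) ?_, ?_⟩
    · simp [Matrix.det_diagonal, Fin.prod_univ_two]
    · ext
      rw [Matrix.GeneralLinearGroup.val_det_apply]
      show Matrix.det (Matrix.diagonal ![(u:F), 1]) = (u : F)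
      simp [Matrix.det_diagonal, Fin.prod_univ_two]
  have e1 : (GL (Fin 2) F ⧸ φ.ker) ≃ Fˣ := (QuotientGroup.quotientKerEquivOfSurjective φ hsurj).toEquiv
  have e2 : Matrix.SpecialLinearGroup (Fin 2) F ≃ φ.ker := by
    refine ⟨fun g => ⟨Matrix.SpecialLinearGroup.toGL g, ?_⟩,
      fun u => ⟨(u : GL (Fin 2) F), ?_⟩, fun g => rfl, fun u => Subtype.ext (Units.ext rfl)⟩
    · have : Matrix.det (g : Matrix (Fin 2) (Fin 2) F) = 1 := g.2
      exact Units.ext (by simpa [φ, Matrix.SpecialLinearGroup.toGL] using this)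
    · have := u.2
      have : ((φ u.1 : Fˣ) : F) = 1 := by rw [u.2]; rfl
      simpa [φ] using this
  have hcard := Subgroup.card_eq_card_quotient_mul_card_subgroup φ.ker
  rw [Nat.card_congr e1, ← Nat.card_congr e2] at hcard
  have hGL : Nat.card (GL (Fin 2) F) =
      (Fintype.card F ^ 2 - 1) * (Fintype.card F ^ 2 - Fintype.card F) := by
    rw [Matrix.card_GL_field]
    simp [Fin.prod_univ_two]
  have hU : Nat.card Fˣ = Fintype.card F - 1 := by
    simp [Nat.card_eq_fintype_card, Fintype.card_units]
  rw [hGL, hU] at hcard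
  rw [hcard, Nat.mul_comm]

end CardAux

theorem trace_pi (F : Type*) [Field F] [Fintype F] [DecidableEq F]
    (hq : 2 < Fintype.card F) (q : ℚ) (hqc : q = Fintype.card F)
    (π₁ π₂ π₃ π₄ : MonoidAlgebra ℚ (Matrix.SpecialLinearGroup (Fin 2) F))
    (hπ₁ : π₁ = (q ^ 3 - q)⁻¹ •
      (elA ℚ F + elB ℚ F + elC ℚ F + elDp ℚ F + elDm ℚ F + elEp ℚ F + elEm ℚ F))
    (hπ₂ : π₂ = ((q - 2) / (2 * (q ^ 2 - q))) • (elA ℚ F + elB ℚ F) +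
      (q * (q - 1) ^ 2)⁻¹ • elC ℚ F -
      ((q - 2) / (2 * q * (q - 1) ^ 2)) • (elDp ℚ F + elDm ℚ F + elEp ℚ F + elEm ℚ F))
    (hπ₃ : π₃ = (2 * (q + 1))⁻¹ • (elA ℚ F - elB ℚ F) +
      (2 * (q ^ 2 - 1))⁻¹ • (-elDp ℚ F - elDm ℚ F + elEp ℚ F + elEm ℚ F))
    (hπ₄ : π₄ = ((q + 1) * (q - 1) ^ 2)⁻¹ •
      ((2 * (q - 1)) • elA ℚ F - (2 : ℚ) • elC ℚ F + (q - 2) • (elDp ℚ F + elDm ℚ F) -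
        (elEp ℚ F + elEm ℚ F))) :
    LinearMap.trace ℚ (MonoidAlgebra ℚ (Matrix.SpecialLinearGroup (Fin 2) F)) (LinearMap.mulLeft ℚ π₁) = 1 ∧
    LinearMap.trace ℚ (MonoidAlgebra ℚ (Matrix.SpecialLinearGroup (Fin 2) F)) (LinearMap.mulLeft ℚ π₂) = (q + 1) * (q - 2) / 2 ∧
    LinearMap.trace ℚ (MonoidAlgebra ℚ (Matrix.SpecialLinearGroup (Fin 2) F)) (LinearMap.mulLeft ℚ π₃) = q * (q - 1) / 2 ∧
    LinearMap.trace ℚ (MonoidAlgebra ℚ (Matrix.SpecialLinearGroup (Fin 2) F)) (LinearMap.mulLeft ℚ π₄) = 2 * q := by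
  classical
  have hq3 : (3:ℚ) ≤ q := by rw [hqc]; exact_mod_cast hq
  have hq0 : q ≠ 0 := by nlinarith
  have hqm1 : q - 1 ≠ 0 := by nlinarith [sq_nonneg q]
  have hqp1 : q + 1 ≠ 0 := by nlinarith
  have hcard : (Fintype.card (Matrix.SpecialLinearGroup (Fin 2) F) : ℚ) = q ^ 3 - q := by
    have h := card_SL2 F
    have hn : 2 < Fintype.card F := hq
    have h1 : 1 ≤ Fintype.card F := by omega
    have h2 : Fintype.card F ≤ Fintype.card F ^ 2 := by nlinarith
    have h3 : 1 ≤ Fintype.card F ^ 2 := by nlinarith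
    have hQ : (Nat.card (Matrix.SpecialLinearGroup (Fin 2) F) : ℚ) * (q - 1)
        = (q ^ 2 - 1) * (q ^ 2 - q) := by
      have hc := congrArg (fun m : ℕ => (m : ℚ)) h
      push_cast [Nat.cast_sub h1, Nat.cast_sub h2, Nat.cast_sub h3] at hc
      rw [hqc]; exact_mod_cast hc
    rw [Nat.card_eq_fintype_card] at hQ
    have hc2 : (Fintype.card (Matrix.SpecialLinearGroup (Fin 2) F) : ℚ) * (q - 1)
        = (q ^ 3 - q) * (q - 1) := by rw [hQ]; ring
    exact mul_right_cancel₀ hqm1 hc2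
  have hA : (elA ℚ F).coeff 1 = 1 := by rw [elA, suppClass_apply_one]; norm_num
  have hB : (elB ℚ F).coeff 1 = 0 := by rw [elB, suppClass_apply_one]; norm_num
  have hC : (elC ℚ F).coeff 1 = 0 := by rw [elC, suppClass_apply_one]; norm_num
  have hDp : (elDp ℚ F).coeff 1 = 0 := by rw [elDp, suppClass_apply_one]; norm_num
  have hDm : (elDm ℚ F).coeff 1 = 0 := by rw [elDm, suppClass_apply_one]; norm_num
  have hEp : (elEp ℚ F).coeff 1 = 0 := by rw [elEp, suppClass_apply_one]; norm_num
  have hEm : (elEm ℚ F).coeff 1 = 0 := by rw [elEm, suppClass_apply_one]; norm_num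
  have addap : ∀ (x y : MonoidAlgebra ℚ (Matrix.SpecialLinearGroup (Fin 2) F))
      (g : Matrix.SpecialLinearGroup (Fin 2) F), (x + y).coeff g = x.coeff g + y.coeff g :=
    fun x y g => by rw [MonoidAlgebra.coeff_add, Finsupp.add_apply]
  have subap : ∀ (x y : MonoidAlgebra ℚ (Matrix.SpecialLinearGroup (Fin 2) F))
      (g : Matrix.SpecialLinearGroup (Fin 2) F), (x - y).coeff g = x.coeff g - y.coeff g :=
    fun x y g => by rw [MonoidAlgebra.coeff_sub, Finsupp.sub_apply]
  have negap : ∀ (x : MonoidAlgebra ℚ (Matrix.SpecialLinearGroup (Fin 2) F))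
      (g : Matrix.SpecialLinearGroup (Fin 2) F), (-x).coeff g = -(x.coeff g) :=
    fun x g => by rw [MonoidAlgebra.coeff_neg, Finsupp.neg_apply]
  have smulap : ∀ (c : ℚ) (x : MonoidAlgebra ℚ (Matrix.SpecialLinearGroup (Fin 2) F))
      (g : Matrix.SpecialLinearGroup (Fin 2) F), (c • x).coeff g = c * x.coeff g :=
    fun c x g => by rw [MonoidAlgebra.coeff_smul_apply, smul_eq_mul]
  have hne1 : q ^ 3 - q ≠ 0 := by
    have h : q ^ 3 - q = q * (q - 1) * (q + 1) := by ring
    rw [h]; exact mul_ne_zero (mul_ne_zero hq0 hqm1) hqp1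
  have hne2 : q ^ 2 - q ≠ 0 := by
    have h : q ^ 2 - q = q * (q - 1) := by ring
    rw [h]; exact mul_ne_zero hq0 hqm1
  have hne3 : q ^ 2 - 1 ≠ 0 := by
    have h : q ^ 2 - 1 = (q - 1) * (q + 1) := by ring
    rw [h]; exact mul_ne_zero hqm1 hqp1
  refine ⟨?_, ?_, ?_, ?_⟩
  · rw [trace_mulLeft_eq, hcard, hπ₁]
    simp only [addap, subap, negap, smulap, hA, hB, hC, hDp, hDm, hEp, hEm]
    field_simp
    norm_num
  · rw [trace_mulLeft_eq, hcard, hπ₂]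
    simp only [addap, subap, negap, smulap, hA, hB, hC, hDp, hDm, hEp, hEm]
    field_simp
    ring
  · rw [trace_mulLeft_eq, hcard, hπ₃]
    simp only [addap, subap, negap, smulap, hA, hB, hC, hDp, hDm, hEp, hEm]
    field_simp
    ring
  · rw [trace_mulLeft_eq, hcard, hπ₄]
    simp only [addap, subap, negap, smulap, hA, hB, hC, hDp, hDm, hEp, hEm]
    field_simp
    ring
end
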